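/- arXiv:1506.04054 — 3 statements merged into one kernel-verified Lean document; each statement's English description precedes it below -/
import Mathlib

section
/- A simple graph G has a unique Sachs subgraph if and only if G can be reduced to a (possibly empty) family of pairwise independent odd cycles by repeatedly deleting pendant edges together with both of their end-vertices. -/
open scoped Classical

/-- Degree of a vertex in a simple graph (as a cardinality, avoiding decidability). -/
noncomputable def ndeg {V : Type*} (H : SimpleGraph V) (v : V) : ℕ :=
  Nat.card {w // H.Adj v w}

/-- `H` is a Sachs subgraph of the simple graph `G`: a spanning subgraph all of whose
components are `K₂`'s or cycles. -/
def IsSachsSubgraph {n : ℕ} (G H : SimpleGraph (Fin n)) : Prop :=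
  H ≤ G ∧ (∀ v, ndeg H v = 1 ∨ ndeg H v = 2) ∧
    ∀ u v, H.Adj u v → ¬(ndeg H u = 1 ∧ ndeg H v = 2)

/-- `PendantReduces G U W`: starting from the induced subgraph of `G` on the vertex set
`U`, one can reach the vertex set `W` by repeatedly deleting a pendant edge together
with both of its end-vertices. -/
inductive PendantReduces {n : ℕ} (G : SimpleGraph (Fin n)) :
    Finset (Fin n) → Finset (Fin n) → Prop
  | refl (U : Finset (Fin n)) : PendantReduces G U U
  | step {U W : Finset (Fin n)} (u v : Fin n)
      (hu : u ∈ (↑U : Set (Fin n))) (hv : v ∈ U) (huv : G.Adj u v)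
      (hdeg : ndeg (G.induce (↑U : Set (Fin n))) ⟨u, hu⟩ = 1)
      (h : PendantReduces G (U \ {u, v}) W) : PendantReduces G U W

/-- The induced subgraph of `G` on `U` is a (possibly empty) family of pairwise
independent odd cycles: every vertex of `U` has induced degree `2` (so no edge of `G`
joins two different cycles) and every connected component has an odd number of
vertices. -/
def IsIndependentOddCycles {n : ℕ} (G : SimpleGraph (Fin n)) (U : Finset (Fin n)) : Prop :=
  (∀ v : (↑U : Set (Fin n)), ndeg (G.induce (↑U : Set (Fin n))) v = 2) ∧
  ∀ c : (G.induce (↑U : Set (Fin n))).ConnectedComponent, Odd (Nat.card c.supp)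
/-! ### Generic helpers about `ndeg` -/

section Helpers

variable {V : Type*}

lemma ndeg_eq_ncard (H : SimpleGraph V) (v : V) : ndeg H v = (H.neighborSet v).ncard :=
  (Nat.card_coe_set_eq (H.neighborSet v)).symm

lemma ndeg_le_one (H : SimpleGraph V) (v a : V) (h : ∀ w, H.Adj v w → w = a) :
    ndeg H v ≤ 1 := by
  rw [ndeg_eq_ncard]
  calc (H.neighborSet v).ncard ≤ ({a} : Set V).ncard := by
        apply Set.ncard_le_ncard _ (Set.finite_singleton a)
        intro w hw; exact h w hw
    _ = 1 := Set.ncard_singleton a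

lemma ndeg_eq_one_iff (H : SimpleGraph V) (v : V) :
    ndeg H v = 1 ↔ ∃ a, H.neighborSet v = {a} := by
  rw [ndeg_eq_ncard]; exact Set.ncard_eq_one

lemma exists_adj_of_ndeg_one_or_two (H : SimpleGraph V) (v : V)
    (h : ndeg H v = 1 ∨ ndeg H v = 2) : ∃ w, H.Adj v w := by
  have h0 : (H.neighborSet v).ncard ≠ 0 := by
    rw [← ndeg_eq_ncard]; rcases h with h | h <;> omega
  obtain ⟨w, hw⟩ := Set.nonempty_of_ncard_ne_zero h0
  exact ⟨w, hw⟩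

lemma ndeg_mono [Finite V] {H H' : SimpleGraph V} (h : H ≤ H') (v : V) :
    ndeg H v ≤ ndeg H' v := by
  rw [ndeg_eq_ncard, ndeg_eq_ncard]
  exact Set.ncard_le_ncard (fun w hw => h hw) (Set.toFinite _)

/-- For a graph all of whose degrees are `1` or `2`, adjacent vertices that may not mix
degrees (Sachs condition) have equal degrees. -/
lemma ndeg_eq_of_adj {S : SimpleGraph V}
    (hdeg : ∀ v, ndeg S v = 1 ∨ ndeg S v = 2)
    (h3 : ∀ u v, S.Adj u v → ¬(ndeg S u = 1 ∧ ndeg S v = 2))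
    {a b : V} (hab : S.Adj a b) : ndeg S a = ndeg S b := by
  rcases hdeg a with ha | ha <;> rcases hdeg b with hb | hb <;>
    first
      | omega
      | (exfalso; exact h3 a b hab ⟨ha, hb⟩)
      | (exfalso; exact h3 b a hab.symm ⟨hb, ha⟩)

/-- The generic Sachs predicate over an arbitrary vertex type. -/
def IsSachs (H S : SimpleGraph V) : Prop :=
  S ≤ H ∧ (∀ v, ndeg S v = 1 ∨ ndeg S v = 2) ∧
    ∀ u v, S.Adj u v → ¬(ndeg S u = 1 ∧ ndeg S v = 2)

end Helpers
/-! ### Graphs of fixed-point-free adjacency permutations -/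

section PermGraph

variable {V : Type*}

/-- The graph whose edges join `a` to `σ a`. -/
def permGraph (σ : Equiv.Perm V) : SimpleGraph V where
  Adj a b := (b = σ a ∨ a = σ b) ∧ a ≠ b
  symm := ⟨by
    rintro a b ⟨h, hne⟩
    exact ⟨h.symm, hne.symm⟩⟩
  loopless := ⟨fun a h => h.2 rfl⟩

lemma permGraph_adj (σ : Equiv.Perm V) (a b : V) :
    (permGraph σ).Adj a b ↔ (b = σ a ∨ b = σ⁻¹ a) ∧ a ≠ b := by
  constructor
  · rintro ⟨h, hne⟩
    refine ⟨h.imp id (fun h' => ?_), hne⟩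
    rw [h']; simp
  · rintro ⟨h, hne⟩
    refine ⟨h.imp id (fun h' => ?_), hne⟩
    rw [h']; simp

variable {H : SimpleGraph V} {σ : Equiv.Perm V}

lemma permGraph_neighborSet (hσ : ∀ v, H.Adj v (σ v)) (a : V) :
    (permGraph σ).neighborSet a = {σ a, σ⁻¹ a} := by
  ext b
  simp only [SimpleGraph.mem_neighborSet, permGraph_adj, Set.mem_insert_iff,
    Set.mem_singleton_iff]
  constructor
  · rintro ⟨h, _⟩; exact h
  · rintro h
    refine ⟨h, ?_⟩
    rintro rfl
    rcases h with h | h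
    · exact (hσ a).ne h
    · have hs : σ a = a := by conv_lhs => rw [h]; simp
      exact (hσ a).ne hs.symm
lemma permGraph_le (hσ : ∀ v, H.Adj v (σ v)) : permGraph σ ≤ H := by
  rintro a b ⟨h, hne⟩
  rcases h with rfl | rfl
  · exact hσ a
  · exact (hσ b).symm

lemma permGraph_ndeg (hσ : ∀ v, H.Adj v (σ v)) (a : V) :
    ndeg (permGraph σ) a = if σ a = σ⁻¹ a then 1 else 2 := by
  rw [ndeg_eq_ncard, permGraph_neighborSet hσ]
  split_ifs with h
  · rw [h, Set.pair_eq_singleton, Set.ncard_singleton]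
  · exact Set.ncard_pair h

lemma permGraph_isSachs (hσ : ∀ v, H.Adj v (σ v)) : IsSachs H (permGraph σ) := by
  refine ⟨permGraph_le hσ, fun v => ?_, fun u v huv => ?_⟩
  · rw [permGraph_ndeg hσ]; split_ifs <;> simp
  · rintro ⟨h1, h2⟩
    rw [permGraph_ndeg hσ] at h1 h2
    by_cases hu : σ u = σ⁻¹ u
    · -- then σ (σ u) = u, and v = σ u, so σ v = u = σ⁻¹ v, contradicting ndeg v = 2
      have huu : σ (σ u) = u := by conv_lhs => rw [hu]; simp
      have hv : v = σ u := by
        have := (permGraph_adj σ u v).mp huv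
        rcases this.1 with h | h
        · exact h
        · rw [← hu] at h; exact h
      have : σ v = σ⁻¹ v := by
        subst hv
        rw [huu]; simp
      rw [if_pos this] at h2
      omega
    · rw [if_neg hu] at h1; omega

end PermGraph
/-! ### From a Sachs subgraph to a fixed-point-free adjacency permutation (Hall) -/

section Hall

variable {V : Type*} [Fintype V] [DecidableEq V]

lemma exists_perm_of_isSachs {H S : SimpleGraph V} (hS : IsSachs H S) :
    ∃ σ : Equiv.Perm V, ∀ v, S.Adj v (σ v) := by
  obtain ⟨hle, hdeg, h3⟩ := hS
  set t : V → Finset V := fun v => (S.neighborSet v).toFinset with ht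
  have hmem : ∀ a b, b ∈ t a ↔ S.Adj a b := by
    intro a b; simp [ht]
  have hcard : ∀ v, (t v).card = ndeg S v := by
    intro v
    rw [ndeg_eq_ncard, Set.ncard_eq_toFinset_card']
  have heq : ∀ a b, S.Adj a b → ndeg S a = ndeg S b := fun a b hab =>
    ndeg_eq_of_adj hdeg h3 hab
  -- Hall's condition
  have hall : ∀ A : Finset V, A.card ≤ (A.biUnion t).card := by
    intro A
    set A1 := A.filter (fun a => ndeg S a = 1) with hA1
    set A2 := A.filter (fun a => ¬ ndeg S a = 1) with hA2
    have hA2deg : ∀ a ∈ A2, ndeg S a = 2 := by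
      intro a ha
      rw [hA2, Finset.mem_filter] at ha
      rcases hdeg a with h | h
      · exact absurd h ha.2
      · exact h
    set N1 := A1.biUnion t with hN1
    set N2 := A2.biUnion t with hN2
    have hN1deg : ∀ b ∈ N1, ndeg S b = 1 := by
      intro b hb
      rw [hN1, Finset.mem_biUnion] at hb
      obtain ⟨a, ha, hba⟩ := hb
      rw [hA1, Finset.mem_filter] at ha
      rw [← heq a b ((hmem a b).mp hba), ha.2]
    have hN2deg : ∀ b ∈ N2, ndeg S b = 2 := by
      intro b hb
      rw [hN2, Finset.mem_biUnion] at hb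
      obtain ⟨a, ha, hba⟩ := hb
      rw [← heq a b ((hmem a b).mp hba)]
      exact hA2deg a ha
    have hdisj : Disjoint N1 N2 := by
      rw [Finset.disjoint_left]
      intro b hb1 hb2
      have := hN1deg b hb1; have := hN2deg b hb2; omega
    -- partner map for degree-1 vertices
    have hpart : ∀ a, ndeg S a = 1 → ∃ p, S.neighborSet a = {p} := by
      intro a ha; exact (ndeg_eq_one_iff S a).mp ha
    set p : V → V := fun a => if h : ndeg S a = 1 then (hpart a h).choose else a with hp
    have hpadj : ∀ a, ndeg S a = 1 → S.Adj a (p a) := by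
      intro a ha
      have hspec := (hpart a ha).choose_spec
      rw [hp]; simp only [dif_pos ha]
      have h0 : (hpart a ha).choose ∈ ({(hpart a ha).choose} : Set V) := rfl
      rwa [← hspec] at h0
    have hpuniq : ∀ a w, ndeg S a = 1 → S.Adj a w → w = p a := by
      intro a w ha haw
      have hspec := (hpart a ha).choose_spec
      rw [hp]; simp only [dif_pos ha]
      have : w ∈ S.neighborSet a := haw
      rw [hspec] at this
      exact this
    have hcard1 : A1.card ≤ N1.card := by
      apply Finset.card_le_card_of_injOn p
      · intro a ha
        rw [hN1, Finset.mem_coe, Finset.mem_biUnion]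
        have ha1 : ndeg S a = 1 := (Finset.mem_filter.mp ha).2
        exact ⟨a, ha, (hmem a (p a)).mpr (hpadj a ha1)⟩
      · intro a ha a' ha' hpp
        have ha1 : ndeg S a = 1 := (Finset.mem_filter.mp ha).2
        have ha1' : ndeg S a' = 1 := (Finset.mem_filter.mp ha').2
        set b := p a with hb
        have hab : S.Adj a b := hpadj a ha1
        have hab' : S.Adj a' b := by rw [hpp]; exact hpadj a' ha1'
        have hbdeg : ndeg S b = 1 := by rw [← heq a b hab]; exact ha1
        have h1 : a = p b := hpuniq b a hbdeg hab.symm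
        have h2 : a' = p b := hpuniq b a' hbdeg hab'.symm
        rw [h1, h2]
    have hcard2 : A2.card ≤ N2.card := by
      -- double counting of incidences
      have key : 2 * A2.card ≤ 2 * N2.card := by
        set P1 : Finset (V × V) := A2.biUnion (fun a => (t a).image (fun b => (a, b))) with hP1
        set P2 : Finset (V × V) := N2.biUnion (fun b => (t b).image (fun a => (a, b))) with hP2
        have hcardP1 : P1.card = 2 * A2.card := by
          rw [hP1, Finset.card_biUnion]
          · rw [Finset.sum_congr rfl (fun a ha => ?_), Finset.sum_const, smul_eq_mul,
              mul_comm]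
            rw [Finset.card_image_of_injective _ (fun x y hxy => (Prod.mk.injEq _ _ _ _).mp hxy |>.2),
              hcard, hA2deg a ha]
          · intro a ha a' ha' hne
            rw [Function.onFun, Finset.disjoint_left]
            intro x hx hx'
            simp only [Finset.mem_image] at hx hx'
            obtain ⟨b, _, rfl⟩ := hx
            obtain ⟨b', _, h⟩ := hx'
            exact hne ((Prod.mk.injEq _ _ _ _).mp h).1.symm
        have hcardP2 : P2.card = 2 * N2.card := by
          rw [hP2, Finset.card_biUnion]
          · rw [Finset.sum_congr rfl (fun b hb => ?_), Finset.sum_const, smul_eq_mul,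
              mul_comm]
            rw [Finset.card_image_of_injective _ (fun x y hxy => (Prod.mk.injEq _ _ _ _).mp hxy |>.1),
              hcard, hN2deg b hb]
          · intro b hb b' hb' hne
            rw [Function.onFun, Finset.disjoint_left]
            intro x hx hx'
            simp only [Finset.mem_image] at hx hx'
            obtain ⟨a, _, rfl⟩ := hx
            obtain ⟨a', _, h⟩ := hx'
            exact hne ((Prod.mk.injEq _ _ _ _).mp h).2.symm
        have hsub : P1 ⊆ P2 := by
          intro x hx
          rw [hP1, Finset.mem_biUnion] at hx
          obtain ⟨a, ha, hx⟩ := hx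
          rw [Finset.mem_image] at hx
          obtain ⟨b, hb, rfl⟩ := hx
          rw [hP2, Finset.mem_biUnion]
          refine ⟨b, ?_, ?_⟩
          · rw [hN2, Finset.mem_biUnion]; exact ⟨a, ha, hb⟩
          · rw [Finset.mem_image]
            exact ⟨a, (hmem b a).mpr ((hmem a b).mp hb).symm, rfl⟩
        rw [← hcardP1, ← hcardP2]
        exact Finset.card_le_card hsub
      omega
    have hAsplit : A1.card + A2.card = A.card := by
      rw [hA1, hA2]; exact Finset.card_filter_add_card_filter_not _
    have hNsub : N1 ∪ N2 ⊆ A.biUnion t := by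
      intro b hb
      rw [Finset.mem_union] at hb
      rcases hb with hb | hb <;>
        · rw [Finset.mem_biUnion] at hb ⊢
          obtain ⟨a, ha, hba⟩ := hb
          exact ⟨a, (Finset.mem_filter.mp ha).1, hba⟩
    calc A.card = A1.card + A2.card := hAsplit.symm
      _ ≤ N1.card + N2.card := by omega
      _ = (N1 ∪ N2).card := (Finset.card_union_of_disjoint hdisj).symm
      _ ≤ (A.biUnion t).card := Finset.card_le_card hNsub
  obtain ⟨f, hfinj, hf⟩ := (Finset.all_card_le_biUnion_card_iff_exists_injective t).mp hall
  refine ⟨Equiv.ofBijective f ((Finite.injective_iff_bijective).mp hfinj), fun v => ?_⟩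
  exact (hmem v (f v)).mp (hf v)

end Hall
/-! ### Building new adjacency permutations -/

section Core

variable {V : Type*} [Fintype V] [DecidableEq V]

set_option linter.unusedSectionVars false

/-- Extend a self-bijection of a set `Z` to a permutation of `V` (identity outside). -/
noncomputable def restrictPerm (W : V → V) (Z : Set V) (hbij : Set.BijOn W Z Z) :
    Equiv.Perm V :=
  Equiv.Perm.ofSubtype (α := V) (p := fun x => x ∈ Z) (hbij.equiv W)

lemma restrictPerm_apply_mem (W : V → V) (Z : Set V) (hbij : Set.BijOn W Z Z)
    {z : V} (hz : z ∈ Z) : restrictPerm W Z hbij z = W z := by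
  rw [restrictPerm, Equiv.Perm.ofSubtype_apply_of_mem _ hz]
  rfl

lemma restrictPerm_apply_not_mem (W : V → V) (Z : Set V) (hbij : Set.BijOn W Z Z)
    {z : V} (hz : z ∉ Z) : restrictPerm W Z hbij z = z :=
  Equiv.Perm.ofSubtype_apply_of_not_mem _ hz

variable {H : SimpleGraph V} {σ : Equiv.Perm V}

/-- The "reverse pairing on an even `σ²`-orbit" construction: if `σ z₀` is not in the
`σ²`-orbit of `z₀` and `σ² z₀ ≠ z₀`, then we get a genuinely different Sachs subgraph. -/
lemma pair_flip_contra (hσ : ∀ v, H.Adj v (σ v))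
    (hgr : ∀ τ : Equiv.Perm V, (∀ v, H.Adj v (τ v)) → permGraph τ = permGraph σ)
    (z0 : V) (h2 : σ (σ z0) ≠ z0)
    (h1 : ¬ ∃ k : ℤ, (σ ^ (2 * k)) z0 = σ z0) : False := by
  have key : ∀ (j : ℤ) (x : V), σ⁻¹ (σ⁻¹ ((σ ^ j) x)) = (σ ^ (j - 2)) x := by
    intro j x
    have h1 : σ⁻¹ (σ⁻¹ ((σ ^ j) x)) = (σ⁻¹ * σ⁻¹ * σ ^ j) x := rfl
    rw [h1]
    congr 1
    group
  set O : Set V := {v | ∃ k : ℤ, (σ ^ (2 * k)) z0 = v} with hO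
  have hmaps : Set.MapsTo (fun v => σ⁻¹ (σ⁻¹ v)) O O := by
    rintro v ⟨k, rfl⟩
    refine ⟨k - 1, ?_⟩
    show (σ ^ (2 * (k-1))) z0 = σ⁻¹ (σ⁻¹ ((σ ^ (2*k)) z0))
    rw [key (2*k) z0]
    congr 1
    ring
  have hsurj : Set.SurjOn (fun v => σ⁻¹ (σ⁻¹ v)) O O := by
    rintro v ⟨k, rfl⟩
    refine ⟨(σ ^ (2 * (k + 1))) z0, ⟨k + 1, rfl⟩, ?_⟩
    simp only
    rw [key (2 * (k+1)) z0]
    congr 1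
    ring
  have hbij := ((Set.toFinite O).surjOn_iff_bijOn_of_mapsTo hmaps).mp hsurj
  set τ : Equiv.Perm V := σ * restrictPerm _ O hbij with hτdef
  have hτO : ∀ v ∈ O, τ v = σ⁻¹ v := by
    intro v hv
    rw [hτdef, Equiv.Perm.mul_apply, restrictPerm_apply_mem _ _ _ hv]
    simp
  have hτO' : ∀ v, v ∉ O → τ v = σ v := by
    intro v hv
    rw [hτdef, Equiv.Perm.mul_apply, restrictPerm_apply_not_mem _ _ _ hv]
  have hτadj : ∀ v, H.Adj v (τ v) := by
    intro v
    by_cases hv : v ∈ O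
    · rw [hτO v hv]
      have := hσ (σ⁻¹ v)
      simpa using this.symm
    · rw [hτO' v hv]; exact hσ v
  have hz0O : z0 ∈ O := ⟨0, by simp⟩
  have hσz0O : σ z0 ∉ O := fun h => h1 h
  have hadj : (permGraph σ).Adj z0 (σ z0) := ⟨Or.inl rfl, (hσ z0).ne⟩
  rw [← hgr τ hτadj] at hadj
  obtain ⟨hor, -⟩ := hadj
  rcases hor with h | h
  · rw [hτO z0 hz0O] at h
    apply h2
    rw [h]
    simp
  · rw [hτO' _ hσz0O] at h
    exact h2 h.symm

end Core
section Walk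

variable {V : Type*} [Fintype V] [DecidableEq V]

set_option linter.unusedSectionVars false

lemma sigma_inv_inv (σ : Equiv.Perm V) (j : ℤ) (x : V) :
    σ⁻¹ (σ⁻¹ ((σ ^ j) x)) = (σ ^ (j - 2)) x := by
  have h1 : σ⁻¹ (σ⁻¹ ((σ ^ j) x)) = (σ⁻¹ * σ⁻¹ * σ ^ j) x := rfl
  rw [h1]
  congr 1
  group

variable {H : SimpleGraph V} {σ : Equiv.Perm V}

/-- If some vertex has a neighbour other than `σ v`, `σ⁻¹ v`, the Sachs subgraph is
not unique. -/
lemma no_good_vertex (hdeg2 : ∀ v, 2 ≤ ndeg H v) (hσ : ∀ v, H.Adj v (σ v))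
    (hgr : ∀ τ : Equiv.Perm V, (∀ v, H.Adj v (τ v)) → permGraph τ = permGraph σ)
    (a0 : V) (hgood0 : ∃ b, H.Adj a0 b ∧ b ≠ σ a0 ∧ b ≠ σ⁻¹ a0) : False := by
  set good : V → Prop := fun a => ∃ b, H.Adj a b ∧ b ≠ σ a ∧ b ≠ σ⁻¹ a with hgooddef
  set n : V → V := fun a => if h : good a then h.choose else σ⁻¹ a with hn
  have hnadj : ∀ a, H.Adj a (n a) := by
    intro a
    rw [hn]
    by_cases h : good a
    · simp only [dif_pos h]
      exact h.choose_spec.1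
    · simp only [dif_neg h]
      simpa using (hσ (σ⁻¹ a)).symm
  have hngood : ∀ a, good a → n a ≠ σ a ∧ n a ≠ σ⁻¹ a := by
    intro a h
    rw [hn]; simp only [dif_pos h]
    exact ⟨h.choose_spec.2.1, h.choose_spec.2.2⟩
  have hnbad : ∀ a, ¬ good a → n a = σ⁻¹ a := by
    intro a h; rw [hn]; simp only [dif_neg h]
  have hbadnbr : ∀ z, ¬ good z → ∀ b, H.Adj z b → b = σ z ∨ b = σ⁻¹ z := by
    intro z hz b hb
    by_contra hcon
    push_neg at hcon
    exact hz ⟨b, hb, hcon.1, hcon.2⟩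
  have hs2 : ∀ z, ¬ good z → σ (σ z) ≠ z := by
    intro z hz hcon
    have hzz : σ z = σ⁻¹ z := by
      rw [Equiv.Perm.eq_inv_iff_eq]
      exact hcon
    have hle : ndeg H z ≤ 1 := by
      apply ndeg_le_one H z (σ z)
      intro w hw
      rcases hbadnbr z hz w hw with h | h
      · exact h
      · rw [h, ← hzz]
    have := hdeg2 z
    omega
  set W : V → V := fun a => σ⁻¹ (n a) with hW
  -- eventual periodicity
  obtain ⟨t0, q, hq, hper0⟩ : ∃ t0 q : ℕ, 0 < q ∧ W^[t0 + q] a0 = W^[t0] a0 := by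
    obtain ⟨x, y, hne, hxy⟩ := Finite.exists_ne_map_eq_of_infinite (fun t : ℕ => W^[t] a0)
    rcases Nat.lt_or_ge x y with h | h
    · exact ⟨x, y - x, by omega, by
        show W^[x + (y-x)] a0 = W^[x] a0
        rw [show x + (y-x) = y by omega]; exact hxy.symm⟩
    · have h' : y < x := by omega
      exact ⟨y, x - y, by omega, by
        show W^[y + (x-y)] a0 = W^[y] a0
        rw [show y + (x-y) = x by omega]; exact hxy⟩
  set z0 : V := W^[t0] a0 with hz0
  have hper : W^[q] z0 = z0 := by
    conv_lhs => rw [hz0]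
    rw [← Function.iterate_add_apply, Nat.add_comm]
    exact hper0
  set Z : Set V := {v | ∃ k : ℕ, W^[k] z0 = v} with hZ
  have hz0Z : z0 ∈ Z := ⟨0, rfl⟩
  have hZit : ∀ k : ℕ, W^[k] z0 ∈ Z := fun k => ⟨k, rfl⟩
  have hmaps : Set.MapsTo W Z Z := by
    rintro v ⟨k, rfl⟩
    exact ⟨k + 1, by rw [Function.iterate_succ_apply']⟩
  have hsurj : Set.SurjOn W Z Z := by
    rintro v ⟨k, rfl⟩
    cases k with
    | zero =>
      refine ⟨W^[q - 1] z0, hZit _, ?_⟩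
      show W (W^[q-1] z0) = z0
      rw [← Function.iterate_succ_apply' W (q-1) z0, show (q - 1).succ = q by omega, hper]
    | succ k' =>
      refine ⟨W^[k'] z0, hZit _, ?_⟩
      show W (W^[k'] z0) = W^[k'+1] z0
      rw [Function.iterate_succ_apply' W k' z0]
  have hbij := ((Set.toFinite Z).surjOn_iff_bijOn_of_mapsTo hmaps).mp hsurj
  set τ : Equiv.Perm V := σ * restrictPerm W Z hbij with hτdef
  have hτZ : ∀ v ∈ Z, τ v = n v := by
    intro v hv
    rw [hτdef, Equiv.Perm.mul_apply, restrictPerm_apply_mem _ _ _ hv]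
    show σ (σ⁻¹ (n v)) = n v
    simp
  have hτZ' : ∀ v, v ∉ Z → τ v = σ v := by
    intro v hv
    rw [hτdef, Equiv.Perm.mul_apply, restrictPerm_apply_not_mem _ _ _ hv]
  have hτadj : ∀ v, H.Adj v (τ v) := by
    intro v
    by_cases hv : v ∈ Z
    · rw [hτZ v hv]; exact hnadj v
    · rw [hτZ' v hv]; exact hσ v
  have hgraph := hgr τ hτadj
  by_cases hZgood : ∃ g ∈ Z, good g
  · obtain ⟨g, hgZ, hg⟩ := hZgood
    have hadjτ : (permGraph τ).Adj g (n g) := ⟨Or.inl (hτZ g hgZ).symm, (hnadj g).ne⟩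
    rw [hgraph] at hadjτ
    obtain ⟨h, -⟩ := (permGraph_adj σ g (n g)).mp hadjτ
    rcases h with h | h
    · exact (hngood g hg).1 h
    · exact (hngood g hg).2 h
  · push_neg at hZgood
    -- every element of Z is bad; iterates are negative even powers of σ
    have hiter : ∀ k : ℕ, W^[k] z0 = (σ ^ (-(2 * (k : ℤ)))) z0 := by
      intro k
      induction k with
      | zero => simp
      | succ k ih =>
        rw [Function.iterate_succ_apply', ih]
        show σ⁻¹ (n ((σ ^ (-(2 * (k:ℤ)))) z0)) = _
        rw [hnbad _ (hZgood _ (by rw [← ih]; exact hZit k)), sigma_inv_inv]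
        congr 1
        push_cast
        ring
    have hperz : (σ ^ (2 * (q : ℤ))) z0 = z0 := by
      have h' : (σ ^ (-(2 * (q:ℤ)))) z0 = z0 := by rw [← hiter q]; exact hper
      calc (σ ^ (2*(q:ℤ))) z0 = (σ ^ (2*(q:ℤ))) ((σ ^ (-(2*(q:ℤ)))) z0) := by rw [h']
        _ = z0 := by rw [← Equiv.Perm.mul_apply, ← zpow_add]; simp
    have hZpow : ∀ j : ℤ, (σ ^ (2 * j)) z0 ∈ Z := by
      intro j
      have hq0 : (q : ℤ) ≠ 0 := by exact_mod_cast hq.ne'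
      set m : ℕ := ((-j) % (q : ℤ)).toNat with hm
      have hm' : (m : ℤ) = (-j) % (q : ℤ) := Int.toNat_of_nonneg (Int.emod_nonneg _ hq0)
      have hdvd : (q : ℤ) ∣ (j + m) := by
        rw [hm']
        have := Int.emod_emod_of_dvd (-j) (dvd_refl (q:ℤ))
        have h2 : (-j) % (q:ℤ) = -j - (q:ℤ) * ((-j) / (q:ℤ)) := by
          rw [Int.emod_def]
        rw [h2]
        ring_nf
        exact ⟨-((-j) / (q:ℤ)), by ring⟩
      obtain ⟨t, ht⟩ := hdvd
      have hfix : ∀ s : ℤ, ((σ ^ (2*(q:ℤ))) ^ s) z0 = z0 :=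
        fun s => Equiv.Perm.zpow_apply_eq_self_of_apply_eq_self hperz s
      have hcalc : (σ ^ (2 * j)) z0 = (σ ^ (-(2 * (m:ℤ)))) ((( σ ^ (2*(q:ℤ)))^t) z0) := by
        rw [← Equiv.Perm.mul_apply]
        congr 1
        rw [← zpow_mul, ← zpow_add]
        congr 1
        linear_combination 2 * ht
      rw [hcalc, hfix t, ← hiter m]
      exact hZit m
    by_cases hB : ∃ k : ℤ, (σ ^ (2 * k)) z0 = σ z0
    · obtain ⟨k0, hk0⟩ := hB
      have hσZ : ∀ v ∈ Z, σ v ∈ Z := by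
        rintro v ⟨m, rfl⟩
        rw [hiter m]
        have hstep : σ ((σ ^ (-(2 * (m:ℤ)))) z0) = (σ ^ (2 * (k0 - m))) z0 := by
          have h1 : σ ((σ ^ (-(2 * (m:ℤ)))) z0) = (σ ^ (-(2 * (m:ℤ)))) (σ z0) := by
            rw [← Equiv.Perm.mul_apply, ← Equiv.Perm.mul_apply]
            congr 1
            group
          rw [h1, ← hk0, ← Equiv.Perm.mul_apply, ← zpow_add]
          congr 1
          ring
        rw [hstep]
        exact hZpow _
      -- first entry into Z
      have hex : ∃ t : ℕ, W^[t] a0 ∈ Z := ⟨t0, hz0Z⟩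
      have htm : W^[Nat.find hex] a0 ∈ Z := Nat.find_spec hex
      rcases Nat.eq_zero_or_pos (Nat.find hex) with h0 | hpos
      · rw [h0] at htm
        exact hZgood a0 htm hgood0
      · set s : ℕ := Nat.find hex - 1 with hs
        have hfind : Nat.find hex = s + 1 := by omega
        have hsnot : W^[s] a0 ∉ Z := Nat.find_min hex (by omega)
        set x : V := W^[s] a0 with hx
        have hx1 : W x ∈ Z := by
          rw [hx]
          rw [← Function.iterate_succ_apply' W s a0, show s.succ = Nat.find hex by omega]
          exact htm
        have hσWx : σ (W x) = n x := by
          show σ (σ⁻¹ (n x)) = n x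
          simp
        have hbZ : n x ∈ Z := by
          have h1 : σ (W x) ∈ Z := hσZ _ hx1
          rwa [hσWx] at h1
        have hbbad : ¬ good (n x) := hZgood _ hbZ
        have hadjxb : H.Adj (n x) x := (hnadj x).symm
        rcases hbadnbr _ hbbad x hadjxb with h | h
        · -- x = σ (n x) = σ (σ (W x)) ∈ Z
          apply hsnot
          rw [h, ← hσWx]
          exact hσZ _ (hσZ _ hx1)
        · -- x = σ⁻¹ (n x) = W x ∈ Z
          apply hsnot
          rw [h]
          exact hx1
    · exact pair_flip_contra hσ hgr z0 (hs2 z0 (hZgood z0 hz0Z)) hB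

end Walk
section HardLemma

variable {V : Type*} [Fintype V] [DecidableEq V]

set_option linter.unusedSectionVars false

lemma hard_lemma {H : SimpleGraph V} (hdeg2 : ∀ v, 2 ≤ ndeg H v)
    (huniq : ∃! S, IsSachs H S) :
    (∀ v, ndeg H v = 2) ∧ ∀ c : H.ConnectedComponent, Odd (Nat.card c.supp) := by
  obtain ⟨S, hS, hSuniq⟩ := huniq
  obtain ⟨σ, hσS⟩ := exists_perm_of_isSachs hS
  have hσ : ∀ v, H.Adj v (σ v) := fun v => hS.1 (hσS v)
  have hgr : ∀ τ : Equiv.Perm V, (∀ v, H.Adj v (τ v)) → permGraph τ = permGraph σ := by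
    intro τ hτ
    rw [hSuniq _ (permGraph_isSachs hτ), hSuniq _ (permGraph_isSachs hσ)]
  have hnogood : ∀ a, ¬ ∃ b, H.Adj a b ∧ b ≠ σ a ∧ b ≠ σ⁻¹ a :=
    fun a h => no_good_vertex hdeg2 hσ hgr a h
  have hnbr : ∀ v, H.neighborSet v = {σ v, σ⁻¹ v} := by
    intro v
    ext b
    simp only [SimpleGraph.mem_neighborSet, Set.mem_insert_iff, Set.mem_singleton_iff]
    constructor
    · intro hb
      by_contra hcon
      push_neg at hcon
      exact hnogood v ⟨b, hb, hcon.1, hcon.2⟩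
    · rintro (rfl | rfl)
      · exact hσ v
      · simpa using (hσ (σ⁻¹ v)).symm
  have hne : ∀ v, σ v ≠ σ⁻¹ v := by
    intro v hcon
    have hle : ndeg H v ≤ 1 := by
      apply ndeg_le_one H v (σ v)
      intro w hw
      have : w ∈ H.neighborSet v := hw
      rw [hnbr v] at this
      rcases this with rfl | rfl
      · rfl
      · exact hcon.symm
    have := hdeg2 v
    omega
  have hdeg : ∀ v, ndeg H v = 2 := by
    intro v
    rw [ndeg_eq_ncard, hnbr v]
    exact Set.ncard_pair (hne v)
  refine ⟨hdeg, fun c => ?_⟩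
  obtain ⟨v, rfl⟩ := c.exists_rep
  show Odd (Nat.card (H.connectedComponentMk v).supp)
  -- v lies on an odd σ-cycle
  have hs2 : σ (σ v) ≠ v := by
    intro hcon
    apply hne v
    rw [Equiv.Perm.eq_inv_iff_eq]
    exact hcon
  have hB : ∃ k : ℤ, (σ ^ (2 * k)) v = σ v := by
    by_contra hcon
    exact pair_flip_contra hσ hgr v hs2 hcon
  obtain ⟨k0, hk0⟩ := hB
  have hfixodd : (σ ^ (2 * k0 - 1)) v = v := by
    have h1 : σ⁻¹ ((σ ^ (2 * k0)) v) = σ⁻¹ (σ v) := by rw [hk0]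
    rw [show σ⁻¹ (σ v) = v from σ.symm_apply_apply v] at h1
    calc (σ ^ (2 * k0 - 1)) v = σ⁻¹ ((σ ^ (2 * k0)) v) := by
          rw [← Equiv.Perm.mul_apply]; congr 1; group
      _ = v := h1
  set t : ℕ := (2 * k0 - 1).natAbs with htdef
  have hodd_t : Odd t := Int.natAbs_odd.mpr ⟨k0 - 1, by ring⟩
  have ht0 : 0 < t := by
    rw [htdef]
    rcases hodd_t with ⟨r, hr⟩
    omega
  have hfixnat : (⇑σ)^[t] v = v := by
    rw [← Equiv.Perm.coe_pow, ← zpow_natCast]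
    rcases Int.natAbs_eq (2 * k0 - 1) with h | h
    · rw [← h]; exact hfixodd
    · have h2 : (σ ^ (-(t:ℤ))) v = v := by rw [htdef, ← h]; exact hfixodd
      calc (σ ^ (t:ℤ)) v = (σ ^ (t:ℤ)) ((σ ^ (-(t:ℤ))) v) := by rw [h2]
        _ = v := by rw [← Equiv.Perm.mul_apply, ← zpow_add]; simp
  have hper : Function.IsPeriodicPt (⇑σ) t v := hfixnat
  set m : ℕ := Function.minimalPeriod (⇑σ) v with hmdef
  have hm_dvd : m ∣ t := hper.minimalPeriod_dvd
  have hm_pos : 0 < m := hper.minimalPeriod_pos ht0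
  have hm_odd : Odd m := by
    rcases Nat.even_or_odd m with he | ho
    · exfalso
      have h2 : (2:ℕ) ∣ t := dvd_trans he.two_dvd hm_dvd
      exact (Nat.not_even_iff_odd.mpr hodd_t) ((even_iff_two_dvd).mpr h2)
    · exact ho
  have hmfix : (⇑σ)^[m] v = v := Function.iterate_minimalPeriod
  -- reduction of iterates mod m
  have hmod : ∀ i : ℕ, (⇑σ)^[i] v = (⇑σ)^[i % m] v := by
    intro i
    conv_lhs => rw [← Nat.div_add_mod i m]
    rw [Nat.add_comm, Function.iterate_add_apply, Function.iterate_mul]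
    congr 1
    exact Function.IsFixedPt.iterate hmfix (i / m)
  -- inverse step stays in the orbit
  have hinv : ∀ i : ℕ, σ⁻¹ ((⇑σ)^[i] v) = (⇑σ)^[i + (m - 1)] v := by
    intro i
    apply σ.injective
    rw [show σ (σ⁻¹ ((⇑σ)^[i] v)) = (⇑σ)^[i] v from σ.apply_symm_apply _]
    have h1 : σ ((⇑σ)^[i + (m-1)] v) = (⇑σ)^[i + (m-1) + 1] v := by
      rw [Function.iterate_succ_apply' (⇑σ) (i + (m-1)) v]
    rw [h1, show i + (m-1) + 1 = i + m by omega, Function.iterate_add_apply,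
      hmfix]
  -- the orbit finset
  set F : Finset V := (Finset.range m).image (fun i => (⇑σ)^[i] v) with hF
  have hsupp : ((H.connectedComponentMk v).supp : Set V) = ↑F := by
    ext w
    rw [SimpleGraph.ConnectedComponent.mem_supp_iff]
    constructor
    · intro hw
      have hreach : H.Reachable v w := (SimpleGraph.ConnectedComponent.eq.mp hw).symm
      obtain ⟨p⟩ := hreach
      have key : ∀ (a b : V) (p : H.Walk a b), (∃ i, (⇑σ)^[i] v = a) →
          ∃ i, (⇑σ)^[i] v = b := by
        intro a b p
        induction p with
        | nil => exact id
        | cons hadj p ih =>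
          rename_i x y z
          rintro ⟨i, rfl⟩
          apply ih
          have hy : y ∈ H.neighborSet ((⇑σ)^[i] v) := hadj
          rw [hnbr] at hy
          rcases hy with rfl | rfl
          · exact ⟨i + 1, Function.iterate_succ_apply' (⇑σ) i v⟩
          · exact ⟨i + (m - 1), (hinv i).symm⟩
      obtain ⟨i, hi⟩ := key v w p ⟨0, rfl⟩
      simp only [Finset.coe_image, Set.mem_image, Finset.mem_coe, Finset.mem_range, hF]
      exact ⟨i % m, by simpa using Nat.mod_lt i hm_pos, by rw [← hmod]; exact hi⟩
    · intro hw
      simp only [Finset.coe_image, Set.mem_image, Finset.mem_coe, Finset.mem_range, hF] at hw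
      obtain ⟨i, hi, rfl⟩ := hw
      apply SimpleGraph.ConnectedComponent.eq.mpr
      have : ∀ j : ℕ, H.Reachable v ((⇑σ)^[j] v) := by
        intro j
        induction j with
        | zero => exact SimpleGraph.Reachable.refl v
        | succ j ih =>
          refine ih.trans ?_
          rw [Function.iterate_succ_apply' (⇑σ) j v]
          exact (hσ ((⇑σ)^[j] v)).reachable
      exact (this i).symm
  have hcardF : F.card = m := by
    rw [hF]
    rw [Finset.card_image_of_injOn, Finset.card_range]
    have key2 : ∀ i j : ℕ, i < j → j < m → (⇑σ)^[i] v = (⇑σ)^[j] v → False := by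
      intro i j hlt hj hij
      have h1 : (⇑σ)^[i] ((⇑σ)^[j - i] v) = (⇑σ)^[i] v := by
        rw [← Function.iterate_add_apply, show i + (j - i) = j by omega]
        exact hij.symm
      have h2 : (⇑σ)^[j - i] v = v := by
        have hinj : Function.Injective ((⇑σ)^[i]) := by
          rw [← Equiv.Perm.coe_pow]
          exact (σ ^ i).injective
        exact hinj h1
      have h3 : Function.IsPeriodicPt (⇑σ) (j - i) v := h2
      have := h3.minimalPeriod_le (by omega)
      omega
    intro i hi j hj hij
    simp only [Finset.mem_coe, Finset.mem_range] at hi hj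
    by_contra hne'
    rcases Nat.lt_or_ge i j with h | h
    · exact key2 i j h hj hij
    · exact key2 j i (by omega) hi hij.symm
  have h5 : (H.connectedComponentMk v).supp.ncard = m := by
    rw [hsupp, Set.ncard_coe_finset, hcardF]
  rw [Nat.card_coe_set_eq, h5]
  exact hm_odd

end HardLemma
section Base

variable {V : Type*} [Fintype V] [DecidableEq V]

set_option linter.unusedSectionVars false

lemma even_card_of_involution (f : V → V) :
    ∀ (n : ℕ) (s : Finset V), s.card = n →
      (∀ x ∈ s, f x ∈ s) → (∀ x ∈ s, f (f x) = x) → (∀ x ∈ s, f x ≠ x) → Even n := by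
  intro n
  induction n using Nat.strong_induction_on with
  | _ n ih =>
    intro s hcard hmaps hinv hne
    rcases Finset.eq_empty_or_nonempty s with rfl | ⟨x, hx⟩
    · simp only [Finset.card_empty] at hcard
      simp [← hcard]
    · have hfx : f x ∈ s := hmaps x hx
      have hxne : f x ≠ x := hne x hx
      set s' := s \ {x, f x} with hs'
      have hsub : {x, f x} ⊆ s := by
        intro y hy
        rcases Finset.mem_insert.mp hy with rfl | hy
        · exact hx
        · rw [Finset.mem_singleton.mp hy]; exact hfx
      have hpaircard : ({x, f x} : Finset V).card = 2 := by
        rw [Finset.card_insert_of_notMem (by simp [Ne.symm hxne]), Finset.card_singleton]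
      have hn2 : 2 ≤ n := by
        rw [← hcard, ← hpaircard]
        exact Finset.card_le_card hsub
      have hcard' : s'.card = n - 2 := by
        rw [hs', Finset.card_sdiff_of_subset hsub, hpaircard, hcard]
      have hmem' : ∀ y, y ∈ s' ↔ y ∈ s ∧ y ≠ x ∧ y ≠ f x := by
        intro y
        rw [hs', Finset.mem_sdiff, Finset.mem_insert, Finset.mem_singleton]
        tauto
      have hmaps' : ∀ y ∈ s', f y ∈ s' := by
        intro y hy
        rw [hmem'] at hy ⊢
        obtain ⟨hys, hyx, hyfx⟩ := hy
        refine ⟨hmaps y hys, ?_, ?_⟩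
        · intro hcon
          apply hyfx
          rw [← hcon, hinv y hys]
        · intro hcon
          apply hyx
          have := hinv x hx
          have h2 : f (f y) = f (f x) := by rw [hcon]
          rw [hinv y hys, hinv x hx] at h2
          exact h2
      have hinv' : ∀ y ∈ s', f (f y) = y := fun y hy => hinv y ((hmem' y).mp hy).1
      have hne' : ∀ y ∈ s', f y ≠ y := fun y hy => hne y ((hmem' y).mp hy).1
      have heven := ih (n - 2) (by omega) s' hcard' hmaps' hinv' hne'
      rcases heven with ⟨k, hk⟩
      exact ⟨k + 1, by omega⟩

lemma unique_sachs_of_two_regular {H : SimpleGraph V}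
    (h2 : ∀ v, ndeg H v = 2)
    (hodd : ∀ c : H.ConnectedComponent, Odd (Nat.card c.supp)) :
    ∃! S, IsSachs H S := by
  have hHSachs : IsSachs H H := by
    refine ⟨le_refl H, fun v => Or.inr (h2 v), fun u v huv hcon => ?_⟩
    rw [h2 u] at hcon
    omega
  refine ⟨H, hHSachs, fun T hT => ?_⟩
  obtain ⟨hTle, hTdeg, hT3⟩ := hT
  have hsub : ∀ v, T.neighborSet v ⊆ H.neighborSet v := fun v w hw => hTle hw
  -- degree-2 vertices of T have full neighborhoods
  have hfull : ∀ v, ndeg T v = 2 → T.neighborSet v = H.neighborSet v := by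
    intro v hv
    apply Set.eq_of_subset_of_ncard_le (hsub v) _ (Set.toFinite _)
    rw [← ndeg_eq_ncard, ← ndeg_eq_ncard, hv, h2]
  -- degree-1 vertices propagate along H-edges
  have hD : ∀ v, ndeg T v = 1 → ∀ w, H.Adj v w → ndeg T w = 1 := by
    intro v hv w hw
    rcases hTdeg w with h | h
    · exact h
    exfalso
    have hTvw : T.Adj w v := by
      have : v ∈ T.neighborSet w := by
        rw [hfull w h]
        exact hw.symm
      exact this
    exact hT3 v w hTvw.symm ⟨hv, h⟩
  -- no degree-1 vertices
  have hno1 : ∀ v, ndeg T v ≠ 1 := by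
    intro d0 hd0
    set K : Set V := (H.connectedComponentMk d0).supp with hK
    have hKdeg : ∀ w ∈ K, ndeg T w = 1 := by
      intro w hw
      rw [hK, SimpleGraph.ConnectedComponent.mem_supp_iff] at hw
      have hreach : H.Reachable d0 w := (SimpleGraph.ConnectedComponent.eq.mp hw).symm
      obtain ⟨p⟩ := hreach
      have key : ∀ (a b : V) (p : H.Walk a b), ndeg T a = 1 → ndeg T b = 1 := by
        intro a b p
        induction p with
        | nil => exact id
        | cons hadj p ih =>
          intro ha
          exact ih (hD _ ha _ hadj)
      exact key d0 w p hd0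
    -- the T-partner involution on K
    have hpart : ∀ a, ndeg T a = 1 → ∃ b, T.neighborSet a = {b} :=
      fun a ha => (ndeg_eq_one_iff T a).mp ha
    set p : V → V := fun a => if h : ndeg T a = 1 then (hpart a h).choose else a with hp
    have hpadj : ∀ a, ndeg T a = 1 → T.Adj a (p a) := by
      intro a ha
      have hspec := (hpart a ha).choose_spec
      rw [hp]; simp only [dif_pos ha]
      have h0 : (hpart a ha).choose ∈ ({(hpart a ha).choose} : Set V) := rfl
      rwa [← hspec] at h0
    have hpuniq : ∀ a w, ndeg T a = 1 → T.Adj a w → w = p a := by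
      intro a w ha haw
      have hspec := (hpart a ha).choose_spec
      rw [hp]; simp only [dif_pos ha]
      have : w ∈ T.neighborSet a := haw
      rw [hspec] at this
      exact this
    set Kf : Finset V := K.toFinset with hKf
    have hKmem : ∀ w, w ∈ Kf ↔ w ∈ K := by intro w; rw [hKf, Set.mem_toFinset]
    have hmapsK : ∀ x ∈ Kf, p x ∈ Kf := by
      intro x hxK
      rw [hKmem] at hxK ⊢
      have hx1 : ndeg T x = 1 := hKdeg x hxK
      have hadj : H.Adj x (p x) := hTle (hpadj x hx1)
      rw [hK, SimpleGraph.ConnectedComponent.mem_supp_iff] at hxK ⊢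
      rw [← hxK]
      apply SimpleGraph.ConnectedComponent.eq.mpr
      exact hadj.symm.reachable
    have hinvK : ∀ x ∈ Kf, p (p x) = x := by
      intro x hxK
      rw [hKmem] at hxK
      have hx1 : ndeg T x = 1 := hKdeg x hxK
      have hpxK : p x ∈ Kf := hmapsK x (by rw [hKmem]; exact hxK)
      rw [hKmem] at hpxK
      have hpx1 : ndeg T (p x) = 1 := hKdeg _ hpxK
      exact (hpuniq (p x) x hpx1 (hpadj x hx1).symm).symm
    have hneK : ∀ x ∈ Kf, p x ≠ x := by
      intro x hxK hcon
      rw [hKmem] at hxK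
      have hx1 : ndeg T x = 1 := hKdeg x hxK
      have := hpadj x hx1
      rw [hcon] at this
      exact this.ne rfl
    have heven : Even Kf.card := even_card_of_involution p Kf.card Kf rfl hmapsK hinvK hneK
    have hoddK := hodd (H.connectedComponentMk d0)
    rw [Nat.card_coe_set_eq, show (H.connectedComponentMk d0).supp = K from rfl,
      Set.ncard_eq_toFinset_card'] at hoddK
    rw [← Nat.not_odd_iff_even] at heven
    exact heven hoddK
  -- all degrees 2, so T = H
  ext u w
  constructor
  · exact fun h => hTle h
  · intro h
    have hu2 : ndeg T u = 2 := by
      rcases hTdeg u with h1 | h1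
      · exact absurd h1 (hno1 u)
      · exact h1
    have : w ∈ T.neighborSet u := by
      rw [hfull u hu2]
      exact h
    exact this

end Base
section Ambient

variable {n : ℕ}

/-- Sachs subgraph of `G` supported on the vertex set `U`. -/
def SachsOn (G : SimpleGraph (Fin n)) (U : Finset (Fin n)) (S : SimpleGraph (Fin n)) : Prop :=
  S ≤ G ∧ (∀ v ∈ U, ndeg S v = 1 ∨ ndeg S v = 2) ∧ (∀ v, v ∉ U → ∀ w, ¬ S.Adj v w) ∧
    ∀ u v, S.Adj u v → ¬(ndeg S u = 1 ∧ ndeg S v = 2)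

/-- Spread a graph on the subtype `↑U` back to `Fin n`. -/
def spreadGraph (U : Finset (Fin n)) (T : SimpleGraph (↑U : Set (Fin n))) :
    SimpleGraph (Fin n) :=
  SimpleGraph.map (Function.Embedding.subtype _) T

lemma spreadGraph_adj (U : Finset (Fin n)) (T : SimpleGraph (↑U : Set (Fin n)))
    (x y : Fin n) :
    (spreadGraph U T).Adj x y ↔ ∃ a b, T.Adj a b ∧ ↑a = x ∧ ↑b = y := by
  rw [spreadGraph, SimpleGraph.map_adj]
  rfl

lemma spreadGraph_neighborSet (U : Finset (Fin n)) (T : SimpleGraph (↑U : Set (Fin n)))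
    (a : (↑U : Set (Fin n))) :
    (spreadGraph U T).neighborSet ↑a = Subtype.val '' (T.neighborSet a) := by
  ext w
  simp only [SimpleGraph.mem_neighborSet, Set.mem_image, spreadGraph_adj]
  constructor
  · rintro ⟨x, y, hxy, hx, rfl⟩
    have : x = a := Subtype.val_injective hx
    subst this
    exact ⟨y, hxy, rfl⟩
  · rintro ⟨y, hy, rfl⟩
    exact ⟨a, y, hy, rfl, rfl⟩

lemma ndeg_spreadGraph (U : Finset (Fin n)) (T : SimpleGraph (↑U : Set (Fin n)))
    (a : (↑U : Set (Fin n))) : ndeg (spreadGraph U T) ↑a = ndeg T a := by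
  rw [ndeg_eq_ncard, ndeg_eq_ncard, spreadGraph_neighborSet,
    Set.ncard_image_of_injective _ Subtype.val_injective]

lemma spreadGraph_not_adj (U : Finset (Fin n)) (T : SimpleGraph (↑U : Set (Fin n)))
    {v : Fin n} (hv : v ∉ U) (w : Fin n) : ¬ (spreadGraph U T).Adj v w := by
  rw [spreadGraph_adj]
  rintro ⟨x, y, hxy, hx, rfl⟩
  apply hv
  rw [← hx]
  exact x.2

lemma induce_neighborSet_image {S : SimpleGraph (Fin n)} {U : Finset (Fin n)}
    (hcl : ∀ v w, S.Adj v w → w ∈ U) (v : Fin n) (hv : v ∈ (↑U : Set (Fin n))) :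
    S.neighborSet v =
      Subtype.val '' ((S.induce (↑U : Set (Fin n))).neighborSet ⟨v, hv⟩) := by
  ext w
  simp only [SimpleGraph.mem_neighborSet, Set.mem_image, SimpleGraph.comap_adj,
    Function.Embedding.coe_subtype]
  constructor
  · intro hw
    exact ⟨⟨w, hcl v w hw⟩, hw, rfl⟩
  · rintro ⟨y, hy, rfl⟩
    exact hy

lemma ndeg_induce_of_closed {S : SimpleGraph (Fin n)} {U : Finset (Fin n)}
    (hcl : ∀ v w, S.Adj v w → w ∈ U) (v : Fin n) (hv : v ∈ (↑U : Set (Fin n))) :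
    ndeg (S.induce (↑U : Set (Fin n))) ⟨v, hv⟩ = ndeg S v := by
  rw [ndeg_eq_ncard, ndeg_eq_ncard, induce_neighborSet_image hcl v hv,
    Set.ncard_image_of_injective _ Subtype.val_injective]

lemma sachsOn_closed {G : SimpleGraph (Fin n)} {U : Finset (Fin n)} {S : SimpleGraph (Fin n)}
    (hS : SachsOn G U S) : ∀ v w, S.Adj v w → w ∈ U := by
  intro v w hvw
  by_contra hw
  exact hS.2.2.1 w hw v hvw.symm

lemma sachsOn_isSachs {G : SimpleGraph (Fin n)} {U : Finset (Fin n)} {S : SimpleGraph (Fin n)}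
    (hS : SachsOn G U S) : IsSachs (G.induce (↑U : Set (Fin n))) (S.induce (↑U : Set (Fin n))) := by
  obtain ⟨hle, hdeg, hout, h3⟩ := hS
  have hcl := sachsOn_closed ⟨hle, hdeg, hout, h3⟩
  refine ⟨?_, ?_, ?_⟩
  · intro a b hab
    simp only [SimpleGraph.comap_adj, Function.Embedding.coe_subtype] at hab ⊢
    exact hle hab
  · rintro ⟨v, hv⟩
    rw [ndeg_induce_of_closed hcl v hv]
    exact hdeg v hv
  · rintro ⟨u, hu⟩ ⟨v, hv⟩ huv hcon
    rw [ndeg_induce_of_closed hcl u hu, ndeg_induce_of_closed hcl v hv] at hcon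
    simp only [SimpleGraph.comap_adj, Function.Embedding.coe_subtype] at huv
    exact h3 u v huv hcon

lemma isSachs_sachsOn {G : SimpleGraph (Fin n)} {U : Finset (Fin n)}
    {T : SimpleGraph (↑U : Set (Fin n))}
    (hT : IsSachs (G.induce (↑U : Set (Fin n))) T) : SachsOn G U (spreadGraph U T) := by
  obtain ⟨hle, hdeg, h3⟩ := hT
  have hadj : ∀ x y : Fin n, (spreadGraph U T).Adj x y →
      ∃ (a b : (↑U : Set (Fin n))), T.Adj a b ∧ ↑a = x ∧ ↑b = y :=
    fun x y h => (spreadGraph_adj U T x y).mp h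
  refine ⟨?_, ?_, ?_, ?_⟩
  · intro x y h
    obtain ⟨a, b, hab, rfl, rfl⟩ := hadj x y h
    exact hle hab
  · intro v hv
    have hv' : v ∈ (↑U : Set (Fin n)) := hv
    have := ndeg_spreadGraph U T ⟨v, hv'⟩
    rw [this]
    exact hdeg ⟨v, hv'⟩
  · intro v hv w
    exact spreadGraph_not_adj U T hv w
  · intro u v huv hcon
    obtain ⟨a, b, hab, rfl, rfl⟩ := hadj u v huv
    rw [ndeg_spreadGraph U T a, ndeg_spreadGraph U T b] at hcon
    exact h3 a b hab hcon

lemma spreadGraph_induce {U : Finset (Fin n)} {S : SimpleGraph (Fin n)}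
    (hcl : ∀ v w, S.Adj v w → w ∈ U) :
    spreadGraph U (S.induce (↑U : Set (Fin n))) = S := by
  ext x y
  rw [spreadGraph_adj]
  constructor
  · rintro ⟨a, b, hab, rfl, rfl⟩
    simpa using hab
  · intro hxy
    have hx : x ∈ U := hcl y x hxy.symm
    have hy : y ∈ U := hcl x y hxy
    exact ⟨⟨x, hx⟩, ⟨y, hy⟩, by simpa using hxy, rfl, rfl⟩

lemma induce_spreadGraph {U : Finset (Fin n)} (T : SimpleGraph (↑U : Set (Fin n))) :
    (spreadGraph U T).induce (↑U : Set (Fin n)) = T := by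
  ext a b
  simp only [SimpleGraph.comap_adj, Function.Embedding.coe_subtype]
  rw [spreadGraph_adj]
  constructor
  · rintro ⟨a', b', hab, ha, hb⟩
    have ha' : a' = a := Subtype.val_injective ha
    have hb' : b' = b := Subtype.val_injective hb
    subst ha'; subst hb'
    exact hab
  · intro h
    exact ⟨a, b, h, rfl, rfl⟩

lemma unique_transfer {G : SimpleGraph (Fin n)} {U : Finset (Fin n)} :
    (∃! S, SachsOn G U S) ↔ (∃! T, IsSachs (G.induce (↑U : Set (Fin n))) T) := by
  constructor
  · rintro ⟨S, hS, hu⟩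
    refine ⟨S.induce (↑U : Set (Fin n)), sachsOn_isSachs hS, fun T hT => ?_⟩
    have h1 : spreadGraph U T = S := hu _ (isSachs_sachsOn hT)
    rw [← induce_spreadGraph T, h1]
  · rintro ⟨T, hT, hu⟩
    refine ⟨spreadGraph U T, isSachs_sachsOn hT, fun S hS => ?_⟩
    have h1 : S.induce (↑U : Set (Fin n)) = T := hu _ (sachsOn_isSachs hS)
    rw [← spreadGraph_induce (sachsOn_closed hS), h1]

end Ambient
section Pendant

variable {n : ℕ} {G : SimpleGraph (Fin n)} {U : Finset (Fin n)} {u v : Fin n}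

/-- data for a pendant edge: `u ∈ U` has `v` as unique `G`-neighbour inside `U`. -/
structure PendantData (G : SimpleGraph (Fin n)) (U : Finset (Fin n)) (u v : Fin n) : Prop where
  hu : u ∈ U
  hv : v ∈ U
  huv : G.Adj u v
  huniq : ∀ w ∈ U, G.Adj u w → w = v

lemma pendantData_of_ndeg (hu : u ∈ (↑U : Set (Fin n))) (hv : v ∈ U) (huv : G.Adj u v)
    (hdeg : ndeg (G.induce (↑U : Set (Fin n))) ⟨u, hu⟩ = 1) : PendantData G U u v := by
  obtain ⟨a, ha⟩ := (ndeg_eq_one_iff _ _).mp hdeg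
  have hvmem : (⟨v, hv⟩ : (↑U : Set (Fin n))) ∈
      (G.induce (↑U : Set (Fin n))).neighborSet ⟨u, hu⟩ := by
    simp only [SimpleGraph.mem_neighborSet, SimpleGraph.comap_adj,
      Function.Embedding.coe_subtype]
    exact huv
  rw [ha] at hvmem
  refine ⟨hu, hv, huv, fun w hw hadj => ?_⟩
  have hwmem : (⟨w, hw⟩ : (↑U : Set (Fin n))) ∈
      (G.induce (↑U : Set (Fin n))).neighborSet ⟨u, hu⟩ := by
    simp only [SimpleGraph.mem_neighborSet, SimpleGraph.comap_adj,
      Function.Embedding.coe_subtype]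
    exact hadj
  rw [ha] at hwmem
  rw [Set.mem_singleton_iff] at hvmem hwmem
  have := hwmem.trans hvmem.symm
  exact Subtype.ext_iff.mp this

namespace PendantStep

variable (hp : PendantData G U u v)

/-- removing the pendant edge -/
noncomputable def down (S : SimpleGraph (Fin n)) : SimpleGraph (Fin n) :=
  S.deleteEdges {s(u, v)}

/-- adding back the pendant edge -/
noncomputable def up (S' : SimpleGraph (Fin n)) : SimpleGraph (Fin n) :=
  S' ⊔ SimpleGraph.fromEdgeSet {s(u, v)}

lemma down_adj (S : SimpleGraph (Fin n)) (a b : Fin n) :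
    (down (u := u) (v := v) S).Adj a b ↔ S.Adj a b ∧ ¬ s(a, b) = s(u, v) := by
  rw [down, SimpleGraph.deleteEdges_adj]
  simp

lemma up_adj (S' : SimpleGraph (Fin n)) (a b : Fin n) :
    (up (u := u) (v := v) S').Adj a b ↔ S'.Adj a b ∨ (s(a, b) = s(u, v) ∧ a ≠ b) := by
  rw [up, SimpleGraph.sup_adj, SimpleGraph.fromEdgeSet_adj]
  simp

lemma sym2_cases {a b : Fin n} (h : s(a, b) = s(u, v)) :
    (a = u ∧ b = v) ∨ (a = v ∧ b = u) := by
  rw [Sym2.eq_iff] at h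
  exact h

section WithSachs

variable {S : SimpleGraph (Fin n)} (hS : SachsOn G U S)

include hp hS

lemma adj_u_iff : ∀ w, S.Adj u w → w = v := by
  intro w hw
  exact hp.huniq w (sachsOn_closed hS u w hw) (hS.1 hw)

lemma adj_uv : S.Adj u v := by
  have h1 : ndeg S u ≤ 1 := ndeg_le_one S u v (adj_u_iff hp hS)
  have h2 : ndeg S u = 1 := by rcases hS.2.1 u hp.hu with h | h <;> omega
  obtain ⟨a, ha⟩ := (ndeg_eq_one_iff S u).mp h2
  have haa : a ∈ S.neighborSet u := by rw [ha]; rfl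
  have := adj_u_iff hp hS a haa
  rw [← this]
  exact haa

lemma ndeg_u : ndeg S u = 1 := by
  have h1 : ndeg S u ≤ 1 := ndeg_le_one S u v (adj_u_iff hp hS)
  rcases hS.2.1 u hp.hu with h | h <;> omega

lemma ndeg_v : ndeg S v = 1 := by
  rcases hS.2.1 v hp.hv with h | h
  · exact h
  · exfalso
    exact hS.2.2.2 u v (adj_uv hp hS) ⟨ndeg_u hp hS, h⟩

lemma adj_v_iff : ∀ w, S.Adj v w → w = u := by
  intro w hw
  obtain ⟨a, ha⟩ := (ndeg_eq_one_iff S v).mp (ndeg_v hp hS)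
  have h1 : w ∈ S.neighborSet v := hw
  have h2 : u ∈ S.neighborSet v := (adj_uv hp hS).symm
  rw [ha, Set.mem_singleton_iff] at h1 h2
  rw [h1, h2]

lemma down_no_uv : ∀ a ∈ ({u, v} : Set (Fin n)), ∀ b,
    ¬ (down (u := u) (v := v) S).Adj a b := by
  rintro a ha b hab
  rw [down_adj] at hab
  obtain ⟨hab', hne⟩ := hab
  apply hne
  rcases ha with rfl | ha
  · have := adj_u_iff hp hS b hab'
    subst this
    rfl
  · rw [Set.mem_singleton_iff] at ha
    subst ha
    have := adj_v_iff hp hS b hab'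
    subst this
    rw [Sym2.eq_swap]

lemma down_neighborSet {w : Fin n} (hw : w ∉ ({u, v} : Set (Fin n))) :
    (down (u := u) (v := v) S).neighborSet w = S.neighborSet w := by
  ext b
  simp only [SimpleGraph.mem_neighborSet, down_adj]
  constructor
  · exact fun h => h.1
  · intro h
    refine ⟨h, fun hcon => ?_⟩
    rcases sym2_cases hcon with ⟨rfl, rfl⟩ | ⟨rfl, rfl⟩
    · exact hw (Set.mem_insert _ _)
    · exact hw (Set.mem_insert_of_mem _ rfl)

lemma down_ndeg {w : Fin n} (hw : w ∉ ({u, v} : Set (Fin n))) :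
    ndeg (down (u := u) (v := v) S) w = ndeg S w := by
  rw [ndeg_eq_ncard, ndeg_eq_ncard, down_neighborSet hp hS hw]

lemma down_sachsOn : SachsOn G (U \ {u, v}) (down (u := u) (v := v) S) := by
  have hdle : down (u := u) (v := v) S ≤ S := by
    intro a b h
    rw [down_adj] at h
    exact h.1
  refine ⟨fun a b h => hS.1 (hdle h), ?_, ?_, ?_⟩
  · intro w hw
    rw [Finset.mem_sdiff] at hw
    have hw2 : w ∉ ({u, v} : Set (Fin n)) := by
      simp only [Set.mem_insert_iff, Set.mem_singleton_iff]
      intro hcon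
      apply hw.2
      rcases hcon with rfl | rfl <;> simp
    rw [down_ndeg hp hS hw2]
    exact hS.2.1 w hw.1
  · intro w hw b
    rw [Finset.mem_sdiff] at hw
    push_neg at hw
    by_cases hwU : w ∈ U
    · have hmem : w ∈ ({u, v} : Set (Fin n)) := by
        have := hw hwU
        simp only [Finset.mem_insert, Finset.mem_singleton] at this
        simpa using this
      exact down_no_uv hp hS w hmem b
    · intro hcon
      exact hS.2.2.1 w hwU b (hdle hcon)
  · intro a b hab hcon
    have haU : a ∉ ({u, v} : Set (Fin n)) := by
      intro hmem
      exact down_no_uv hp hS a hmem b hab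
    have hbU : b ∉ ({u, v} : Set (Fin n)) := by
      intro hmem
      exact down_no_uv hp hS b hmem a ((down_adj S a b).mpr ((down_adj S a b).mp hab)).symm
    rw [down_ndeg hp hS haU, down_ndeg hp hS hbU] at hcon
    rw [down_adj] at hab
    exact hS.2.2.2 a b hab.1 hcon

lemma up_down : up (u := u) (v := v) (down (u := u) (v := v) S) = S := by
  ext a b
  rw [up_adj, down_adj]
  constructor
  · rintro (⟨h, -⟩ | ⟨heq, hne⟩)
    · exact h
    · rcases sym2_cases heq with ⟨rfl, rfl⟩ | ⟨rfl, rfl⟩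
      · exact adj_uv hp hS
      · exact (adj_uv hp hS).symm
  · intro h
    by_cases heq : s(a, b) = s(u, v)
    · exact Or.inr ⟨heq, h.ne⟩
    · exact Or.inl ⟨h, heq⟩

end WithSachs

section WithSachs'

variable {S' : SimpleGraph (Fin n)} (hS' : SachsOn G (U \ {u, v}) S')

include hp hS'

lemma up_notmem_uv : ∀ a ∈ ({u, v} : Set (Fin n)), a ∉ U \ ({u, v} : Finset (Fin n)) := by
  rintro a ha hcon
  rw [Finset.mem_sdiff] at hcon
  apply hcon.2
  rcases ha with rfl | ha
  · simp
  · rw [Set.mem_singleton_iff] at ha; subst ha; simp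

lemma S'_no_uv : ∀ a ∈ ({u, v} : Set (Fin n)), ∀ b, ¬ S'.Adj a b := by
  intro a ha b
  exact hS'.2.2.1 a (up_notmem_uv hp hS' a ha) b

lemma up_neighborSet_u : (up (u := u) (v := v) S').neighborSet u = {v} := by
  ext b
  simp only [SimpleGraph.mem_neighborSet, up_adj, Set.mem_singleton_iff]
  constructor
  · rintro (h | ⟨heq, hne⟩)
    · exact absurd h (S'_no_uv hp hS' u (Set.mem_insert _ _) b)
    · rcases sym2_cases heq with ⟨-, rfl⟩ | ⟨rfl, rfl⟩
      · rfl
      · exact absurd rfl hne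
  · rintro rfl
    exact Or.inr ⟨rfl, hp.huv.ne⟩

lemma up_neighborSet_v : (up (u := u) (v := v) S').neighborSet v = {u} := by
  ext b
  simp only [SimpleGraph.mem_neighborSet, up_adj, Set.mem_singleton_iff]
  constructor
  · rintro (h | ⟨heq, hne⟩)
    · exact absurd h (S'_no_uv hp hS' v (Set.mem_insert_of_mem _ rfl) b)
    · rcases sym2_cases heq with ⟨rfl, rfl⟩ | ⟨-, rfl⟩
      · exact absurd rfl hne
      · rfl
  · rintro rfl
    exact Or.inr ⟨Sym2.eq_swap, hp.huv.ne'⟩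

lemma up_ndeg_u : ndeg (up (u := u) (v := v) S') u = 1 := by
  rw [ndeg_eq_ncard, up_neighborSet_u hp hS', Set.ncard_singleton]

lemma up_ndeg_v : ndeg (up (u := u) (v := v) S') v = 1 := by
  rw [ndeg_eq_ncard, up_neighborSet_v hp hS', Set.ncard_singleton]

lemma up_neighborSet_other {w : Fin n} (hw : w ∉ ({u, v} : Set (Fin n))) :
    (up (u := u) (v := v) S').neighborSet w = S'.neighborSet w := by
  ext b
  simp only [SimpleGraph.mem_neighborSet, up_adj]
  constructor
  · rintro (h | ⟨heq, -⟩)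
    · exact h
    · exfalso
      rcases sym2_cases heq with ⟨rfl, -⟩ | ⟨rfl, -⟩
      · exact hw (Set.mem_insert _ _)
      · exact hw (Set.mem_insert_of_mem _ rfl)
  · exact fun h => Or.inl h

lemma up_ndeg_other {w : Fin n} (hw : w ∉ ({u, v} : Set (Fin n))) :
    ndeg (up (u := u) (v := v) S') w = ndeg S' w := by
  rw [ndeg_eq_ncard, ndeg_eq_ncard, up_neighborSet_other hp hS' hw]

lemma up_sachsOn : SachsOn G U (up (u := u) (v := v) S') := by
  refine ⟨?_, ?_, ?_, ?_⟩
  · intro a b h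
    rw [up_adj] at h
    rcases h with h | ⟨heq, -⟩
    · exact hS'.1 h
    · rcases sym2_cases heq with ⟨rfl, rfl⟩ | ⟨rfl, rfl⟩
      · exact hp.huv
      · exact hp.huv.symm
  · intro w hw
    by_cases hmem : w ∈ ({u, v} : Set (Fin n))
    · rcases hmem with rfl | hmem
      · left; exact up_ndeg_u hp hS'
      · rw [Set.mem_singleton_iff] at hmem; subst hmem
        left; exact up_ndeg_v hp hS'
    · rw [up_ndeg_other hp hS' hmem]
      apply hS'.2.1
      rw [Finset.mem_sdiff]
      refine ⟨hw, ?_⟩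
      simp only [Finset.mem_insert, Finset.mem_singleton]
      intro hcon
      apply hmem
      rcases hcon with rfl | rfl
      · exact Set.mem_insert _ _
      · exact Set.mem_insert_of_mem _ rfl
  · intro w hw b hcon
    have hwuv : w ∉ ({u, v} : Set (Fin n)) := by
      intro hmem
      apply hw
      rcases hmem with rfl | hmem
      · exact hp.hu
      · rw [Set.mem_singleton_iff] at hmem; subst hmem; exact hp.hv
    rw [up_adj] at hcon
    rcases hcon with h | ⟨heq, -⟩
    · apply hS'.2.2.1 w _ b h
      rw [Finset.mem_sdiff]
      intro hc
      exact hw hc.1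
    · rcases sym2_cases heq with ⟨rfl, -⟩ | ⟨rfl, -⟩
      · exact hwuv (Set.mem_insert _ _)
      · exact hwuv (Set.mem_insert_of_mem _ rfl)
  · intro a b hab hcon
    rw [up_adj] at hab
    rcases hab with h | ⟨heq, -⟩
    · have haS : a ∉ ({u, v} : Set (Fin n)) := fun hm => S'_no_uv hp hS' a hm b h
      have hbS : b ∉ ({u, v} : Set (Fin n)) := fun hm => S'_no_uv hp hS' b hm a h.symm
      rw [up_ndeg_other hp hS' haS, up_ndeg_other hp hS' hbS] at hcon
      exact hS'.2.2.2 a b h hcon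
    · rcases sym2_cases heq with ⟨rfl, rfl⟩ | ⟨rfl, rfl⟩
      · rw [up_ndeg_v hp hS'] at hcon
        omega
      · rw [up_ndeg_u hp hS'] at hcon
        omega

lemma down_up : down (u := u) (v := v) (up (u := u) (v := v) S') = S' := by
  ext a b
  rw [down_adj, up_adj]
  constructor
  · rintro ⟨h | ⟨heq, -⟩, hne⟩
    · exact h
    · exact absurd heq hne
  · intro h
    refine ⟨Or.inl h, fun heq => ?_⟩
    rcases sym2_cases heq with ⟨rfl, -⟩ | ⟨rfl, -⟩
    · exact S'_no_uv hp hS' a (Set.mem_insert _ _) b h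
    · exact S'_no_uv hp hS' a (Set.mem_insert_of_mem _ rfl) b h

end WithSachs'

include hp in
lemma unique_down (h : ∃! S, SachsOn G U S) : ∃! S', SachsOn G (U \ {u, v}) S' := by
  obtain ⟨S, hS, hu⟩ := h
  refine ⟨down (u := u) (v := v) S, down_sachsOn hp hS, fun S' hS' => ?_⟩
  have h1 : up (u := u) (v := v) S' = S := hu _ (up_sachsOn hp hS')
  rw [← down_up hp hS', h1]

include hp in
lemma unique_up (h : ∃! S', SachsOn G (U \ {u, v}) S') : ∃! S, SachsOn G U S := by
  obtain ⟨S', hS', hu⟩ := h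
  refine ⟨up (u := u) (v := v) S', up_sachsOn hp hS', fun S hS => ?_⟩
  have h1 : down (u := u) (v := v) S = S' := hu _ (down_sachsOn hp hS)
  rw [← up_down hp hS, h1]

end PendantStep

end Pendant
section Main

variable {n : ℕ}

lemma isSachsSubgraph_iff_sachsOn_univ (G S : SimpleGraph (Fin n)) :
    IsSachsSubgraph G S ↔ SachsOn G Finset.univ S := by
  constructor
  · rintro ⟨h1, h2, h3⟩
    exact ⟨h1, fun v _ => h2 v, fun v hv => absurd (Finset.mem_univ v) hv, h3⟩
  · rintro ⟨h1, h2, h3, h4⟩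
    exact ⟨h1, fun v => h2 v (Finset.mem_univ v), h4⟩

lemma backward_lemma (G : SimpleGraph (Fin n)) :
    ∀ U W : Finset (Fin n), PendantReduces G U W → IsIndependentOddCycles G W →
      ∃! S, SachsOn G U S := by
  intro U W hred
  induction hred with
  | refl U =>
    intro hIOC
    rw [unique_transfer]
    exact unique_sachs_of_two_regular hIOC.1 hIOC.2
  | step u v hu hv huv hdeg h ih =>
    intro hIOC
    exact PendantStep.unique_up (pendantData_of_ndeg hu hv huv hdeg) (ih hIOC)

lemma forward_lemma (G : SimpleGraph (Fin n)) :
    ∀ U : Finset (Fin n), (∃! S, SachsOn G U S) →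
      ∃ W, PendantReduces G U W ∧ IsIndependentOddCycles G W := by
  intro U
  induction U using Finset.strongInduction with
  | _ U ih =>
    intro huniq
    by_cases h2 : ∀ x : (↑U : Set (Fin n)), 2 ≤ ndeg (G.induce (↑U : Set (Fin n))) x
    · have hres := hard_lemma h2 (unique_transfer.mp huniq)
      exact ⟨U, PendantReduces.refl U, hres⟩
    · push_neg at h2
      obtain ⟨⟨v, hv⟩, hlt⟩ := h2
      have hcases : ndeg (G.induce (↑U : Set (Fin n))) ⟨v, hv⟩ = 0 ∨
          ndeg (G.induce (↑U : Set (Fin n))) ⟨v, hv⟩ = 1 := by omega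
      rcases hcases with h0 | h1
      · -- induced degree 0: no Sachs subgraph could exist
        exfalso
        obtain ⟨S, hS, -⟩ := huniq
        have hcl := sachsOn_closed hS
        have hle : ndeg S v ≤ ndeg (G.induce (↑U : Set (Fin n))) ⟨v, hv⟩ := by
          rw [← ndeg_induce_of_closed hcl v hv]
          apply ndeg_mono
          intro a b hab
          simp only [SimpleGraph.comap_adj, Function.Embedding.coe_subtype] at hab ⊢
          exact hS.1 hab
        rw [h0] at hle
        have hdv := hS.2.1 v (Finset.mem_coe.mp hv)
        rcases hdv with h | h <;> omega
      · -- induced degree 1: pendant step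
        obtain ⟨a, ha⟩ := (ndeg_eq_one_iff _ _).mp h1
        have hwU : (a : Fin n) ∈ U := a.2
        have hGvw : G.Adj v ↑a := by
          have hmem : a ∈ (G.induce (↑U : Set (Fin n))).neighborSet ⟨v, hv⟩ := by
            rw [ha]; rfl
          simpa using hmem
        have hp := pendantData_of_ndeg hv hwU hGvw h1
        have huniq' := PendantStep.unique_down hp huniq
        have hss : U \ {v, ↑a} ⊂ U := by
          apply Finset.sdiff_ssubset
          · intro x hx
            rcases Finset.mem_insert.mp hx with rfl | hx
            · exact Finset.mem_coe.mp hv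
            · rw [Finset.mem_singleton.mp hx]; exact hwU
          · exact ⟨v, Finset.mem_insert_self _ _⟩
        obtain ⟨W, hred, hIOC⟩ := ih _ hss huniq'
        exact ⟨W, PendantReduces.step v (↑a) hv hwU hGvw h1 hred, hIOC⟩

end Main

/-- A simple graph `G` has a unique Sachs subgraph if and only if `G` can
be reduced to a (possibly empty) family of pairwise independent odd cycles by
repeatedly deleting pendant edges together with both of their end-vertices. -/
theorem unique_sachs_iff_reduces_to_independent_odd_cycles
    {n : ℕ} (G : SimpleGraph (Fin n)) :
    (∃! S : SimpleGraph (Fin n), IsSachsSubgraph G S) ↔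
      ∃ U : Finset (Fin n), PendantReduces G Finset.univ U ∧
        IsIndependentOddCycles G U := by
  have hiff : (∃! S : SimpleGraph (Fin n), IsSachsSubgraph G S) ↔
      (∃! S, SachsOn G Finset.univ S) :=
    existsUnique_congr (fun S => isSachsSubgraph_iff_sachsOn_univ G S)
  rw [hiff]
  constructor
  · intro h
    exact forward_lemma G Finset.univ h
  · rintro ⟨U, hred, hIOC⟩
    exact backward_lemma G Finset.univ U hred hIOC
end

section
/- Let (G,σ) be a signed graph with a perfect matching M such that for every weight function w: E(G) → [−1,1] with w(e) ∈ {−1,1} for all e ∈ M, the weighted graph (G,w) is invertible. Then the spectrum of (G,σ) splits about the origin: exactly half its eigenvalues are positive and half are negative. -/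
open scoped Classical RealInnerProductSpace

/-- `M` is a perfect matching of `G`, as a spanning subgraph of `K₂` components. -/
def IsPerfectMatchingSub {V : Type*} (G M : SimpleGraph V) : Prop :=
  M ≤ G ∧ ∀ v, ndeg M v = 1

section Helpers


set_option linter.unusedSectionVars false
set_option maxHeartbeats 1000000

variable {n : Type*} [Fintype n] [DecidableEq n]

lemma toEuclideanLin_eigen (B : Matrix n n ℝ) (hB : B.IsHermitian) (j : n) :
    Matrix.toEuclideanLin B (hB.eigenvectorBasis j) =
      hB.eigenvalues j • hB.eigenvectorBasis j := by
  apply (WithLp.equiv 2 (n → ℝ)).injective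
  change B.mulVec (hB.eigenvectorBasis j).ofLp = (hB.eigenvalues j • hB.eigenvectorBasis j).ofLp
  simpa using hB.mulVec_eigenvectorBasis j

lemma quad_expand (B : Matrix n n ℝ) (hB : B.IsHermitian) (x : EuclideanSpace ℝ n) :
    ⟪x, Matrix.toEuclideanLin B x⟫ =
      ∑ i, hB.eigenvalues i * (hB.eigenvectorBasis.repr x i) ^ 2 := by
  set b := hB.eigenvectorBasis
  conv_lhs => rw [show Matrix.toEuclideanLin B x
    = Matrix.toEuclideanLin B (∑ j, b.repr x j • b j) by rw [b.sum_repr]]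
  rw [map_sum, inner_sum]
  refine Finset.sum_congr rfl fun j _ => ?_
  rw [map_smul, toEuclideanLin_eigen B hB j, real_inner_smul_right, real_inner_smul_right,
    real_inner_comm, ← b.repr_apply_apply]
  ring

lemma inner_self_expand (b : OrthonormalBasis n ℝ (EuclideanSpace ℝ n)) (x : EuclideanSpace ℝ n) :
    ⟪x, x⟫ = ∑ i, (b.repr x i) ^ 2 := by
  rw [← b.repr.inner_map_map x x, PiLp.inner_apply]
  simp [RCLike.inner_apply, sq]

lemma repr_eq_zero_of_mem_span (b : OrthonormalBasis n ℝ (EuclideanSpace ℝ n)) (s : Set n)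
    (x : EuclideanSpace ℝ n) (hx : x ∈ Submodule.span ℝ (b '' s)) :
    ∀ i ∉ s, b.repr x i = 0 := by
  intro i hi
  induction hx using Submodule.span_induction with
  | mem y hy =>
    obtain ⟨j, hj, rfl⟩ := hy
    rw [b.repr_self]
    simp only [EuclideanSpace.single_apply]
    rw [if_neg]; rintro rfl; exact hi hj
  | zero => simp
  | add y z _ _ hy hz => simp [map_add, hy, hz]
  | smul a y _ hy => simp [map_smul, hy]

lemma finrank_span_eigen (b : OrthonormalBasis n ℝ (EuclideanSpace ℝ n)) (s : Set n) :
    Module.finrank ℝ (Submodule.span ℝ (b '' s)) = Fintype.card s := by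
  rw [Set.image_eq_range]
  exact finrank_span_eq_card ((b.orthonormal.linearIndependent).comp _ Subtype.val_injective)

lemma quad_ge_on_pos_span (B : Matrix n n ℝ) (hB : B.IsHermitian) (c : ℝ)
    (hc : ∀ i, c ≤ |hB.eigenvalues i|) (x : EuclideanSpace ℝ n)
    (hx : x ∈ Submodule.span ℝ (hB.eigenvectorBasis '' {i | 0 < hB.eigenvalues i})) :
    c * ⟪x, x⟫ ≤ ⟪x, Matrix.toEuclideanLin B x⟫ := by
  rw [quad_expand B hB, inner_self_expand hB.eigenvectorBasis, Finset.mul_sum]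
  refine Finset.sum_le_sum fun i _ => ?_
  rcases eq_or_ne (hB.eigenvectorBasis.repr x i) 0 with h | h
  · simp [h]
  · have hi : 0 < hB.eigenvalues i := by
      by_contra hneg
      exact h (repr_eq_zero_of_mem_span _ _ _ hx i hneg)
    have : c ≤ hB.eigenvalues i := (hc i).trans (le_of_eq (abs_of_pos hi))
    nlinarith [sq_nonneg (hB.eigenvectorBasis.repr x i)]

lemma quad_le_on_neg_span (B : Matrix n n ℝ) (hB : B.IsHermitian) (c : ℝ)
    (hc : ∀ i, c ≤ |hB.eigenvalues i|) (x : EuclideanSpace ℝ n)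
    (hx : x ∈ Submodule.span ℝ (hB.eigenvectorBasis '' {i | hB.eigenvalues i < 0})) :
    ⟪x, Matrix.toEuclideanLin B x⟫ ≤ -(c * ⟪x, x⟫) := by
  rw [quad_expand B hB, inner_self_expand hB.eigenvectorBasis, Finset.mul_sum,
    ← Finset.sum_neg_distrib]
  refine Finset.sum_le_sum fun i _ => ?_
  rcases eq_or_ne (hB.eigenvectorBasis.repr x i) 0 with h | h
  · simp [h]
  · have hi : hB.eigenvalues i < 0 := by
      by_contra hneg
      exact h (repr_eq_zero_of_mem_span _ _ _ hx i hneg)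
    have : hB.eigenvalues i ≤ -c := by
      have := (hc i).trans (le_of_eq (abs_of_neg hi)); linarith
    nlinarith [sq_nonneg (hB.eigenvectorBasis.repr x i)]

lemma quad_nonpos_on_span (B : Matrix n n ℝ) (hB : B.IsHermitian) (x : EuclideanSpace ℝ n)
    (hx : x ∈ Submodule.span ℝ (hB.eigenvectorBasis '' {i | hB.eigenvalues i ≤ 0})) :
    ⟪x, Matrix.toEuclideanLin B x⟫ ≤ 0 := by
  rw [quad_expand B hB]
  refine Finset.sum_nonpos fun i _ => ?_
  rcases eq_or_ne (hB.eigenvectorBasis.repr x i) 0 with h | h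
  · simp [h]
  · have hi : hB.eigenvalues i ≤ 0 := by
      by_contra hneg
      exact h (repr_eq_zero_of_mem_span _ _ _ hx i (by simpa using hneg))
    nlinarith [sq_nonneg (hB.eigenvectorBasis.repr x i)]

lemma quad_nonneg_on_span (B : Matrix n n ℝ) (hB : B.IsHermitian) (x : EuclideanSpace ℝ n)
    (hx : x ∈ Submodule.span ℝ (hB.eigenvectorBasis '' {i | 0 ≤ hB.eigenvalues i})) :
    0 ≤ ⟪x, Matrix.toEuclideanLin B x⟫ := by
  rw [quad_expand B hB]
  refine Finset.sum_nonneg fun i _ => ?_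
  rcases eq_or_ne (hB.eigenvectorBasis.repr x i) 0 with h | h
  · simp [h]
  · have hi : 0 ≤ hB.eigenvalues i := by
      by_contra hneg
      exact h (repr_eq_zero_of_mem_span _ _ _ hx i (by simpa using hneg))
    nlinarith [sq_nonneg (hB.eigenvectorBasis.repr x i)]

lemma card_set_eq (P : n → Prop) : Fintype.card {i | P i} = Nat.card {i // P i} := by
  rw [Nat.card_eq_fintype_card]
  exact Fintype.card_congr (Equiv.subtypeEquivRight fun _ => Iff.rfl)

lemma card_pos_add_card_neg (f : n → ℝ) (h : ∀ i, f i ≠ 0) :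
    Nat.card {i // 0 < f i} + Nat.card {i // f i < 0} = Fintype.card n := by
  rw [Nat.card_eq_fintype_card, Nat.card_eq_fintype_card, Fintype.card_subtype,
    Fintype.card_subtype]
  rw [show Finset.filter (fun i => f i < 0) Finset.univ
      = Finset.filter (fun i => ¬ 0 < f i) Finset.univ from
    Finset.filter_congr fun i _ => by
      constructor
      · intro hi; linarith
      · intro hi; rcases lt_or_eq_of_le (not_lt.1 hi) with h' | h'
        · exact h'
        · exact absurd h' (h i)]
  exact Finset.card_filter_add_card_filter_not _

/-- The key inertia-stability lemma: if `C` is a small perturbation of `B` (smaller than the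
least absolute value `c` of the eigenvalues of `B`) and `C` is invertible, then `C` has the
same number of positive (resp. negative) eigenvalues as `B`. -/
lemma inertia_eq (B C : Matrix n n ℝ) (hB : B.IsHermitian) (hC : C.IsHermitian)
    (c : ℝ) (hc0 : 0 < c) (hc : ∀ i, c ≤ |hB.eigenvalues i|)
    (hCne : ∀ i, hC.eigenvalues i ≠ 0)
    (hpert : ∀ x : EuclideanSpace ℝ n, x ≠ 0 →
      |⟪x, Matrix.toEuclideanLin (C - B) x⟫| < c * ⟪x, x⟫) :
    Nat.card {i // 0 < hC.eigenvalues i} = Nat.card {i // 0 < hB.eigenvalues i} ∧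
    Nat.card {i // hC.eigenvalues i < 0} = Nat.card {i // hB.eigenvalues i < 0} := by
  have hBne : ∀ i, hB.eigenvalues i ≠ 0 := fun i h => by
    have := hc i; rw [h] at this; simp at this; linarith
  have hquad : ∀ x : EuclideanSpace ℝ n, ⟪x, Matrix.toEuclideanLin C x⟫
      = ⟪x, Matrix.toEuclideanLin B x⟫ + ⟪x, Matrix.toEuclideanLin (C - B) x⟫ := by
    intro x
    rw [map_sub, LinearMap.sub_apply, inner_sub_right]; ring
  have hsumB := card_pos_add_card_neg hB.eigenvalues hBne
  have hsumC := card_pos_add_card_neg hC.eigenvalues hCne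
  have claim1 : Nat.card {i // 0 < hB.eigenvalues i} + Nat.card {i // hC.eigenvalues i < 0}
      ≤ Fintype.card n := by
    have hdisj : Disjoint (Submodule.span ℝ (hB.eigenvectorBasis '' {i | 0 < hB.eigenvalues i}))
        (Submodule.span ℝ (hC.eigenvectorBasis '' {i | hC.eigenvalues i ≤ 0})) := by
      rw [Submodule.disjoint_def]
      intro x hxU hxW
      by_contra hne
      have h1 := quad_ge_on_pos_span B hB c hc x hxU
      have h2 := quad_nonpos_on_span C hC x hxW
      have h3 := (abs_lt.1 (hpert x hne)).1
      have h4 := hquad x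
      linarith
    have hle := Submodule.finrank_add_finrank_le_of_disjoint hdisj
    rw [finrank_span_eigen, finrank_span_eigen, finrank_euclideanSpace, card_set_eq,
      card_set_eq] at hle
    have : Nat.card {i // hC.eigenvalues i ≤ 0} = Nat.card {i // hC.eigenvalues i < 0} :=
      Nat.card_congr (Equiv.subtypeEquivRight fun i =>
        ⟨fun h => lt_of_le_of_ne h (hCne i), le_of_lt⟩)
    omega
  have claim2 : Nat.card {i // hB.eigenvalues i < 0} + Nat.card {i // 0 < hC.eigenvalues i}
      ≤ Fintype.card n := by
    have hdisj : Disjoint (Submodule.span ℝ (hB.eigenvectorBasis '' {i | hB.eigenvalues i < 0}))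
        (Submodule.span ℝ (hC.eigenvectorBasis '' {i | 0 ≤ hC.eigenvalues i})) := by
      rw [Submodule.disjoint_def]
      intro x hxU hxW
      by_contra hne
      have h1 := quad_le_on_neg_span B hB c hc x hxU
      have h2 := quad_nonneg_on_span C hC x hxW
      have h3 := (abs_lt.1 (hpert x hne)).2
      have h4 := hquad x
      linarith
    have hle := Submodule.finrank_add_finrank_le_of_disjoint hdisj
    rw [finrank_span_eigen, finrank_span_eigen, finrank_euclideanSpace, card_set_eq,
      card_set_eq] at hle
    have : Nat.card {i // 0 ≤ hC.eigenvalues i} = Nat.card {i // 0 < hC.eigenvalues i} :=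
      Nat.card_congr (Equiv.subtypeEquivRight fun i =>
        ⟨fun h => lt_of_le_of_ne h (Ne.symm (hCne i)), le_of_lt⟩)
    omega
  omega

lemma sum_eigenvalues_eq_trace' (B : Matrix n n ℝ) (hB : B.IsHermitian) :
    ∑ i, hB.eigenvalues i = B.trace := by
  conv_rhs => rw [hB.spectral_theorem]
  rw [Unitary.conjStarAlgAut_apply, Matrix.trace_mul_cycle]
  have h1 : (star (hB.eigenvectorUnitary : Matrix n n ℝ)) * (hB.eigenvectorUnitary : Matrix n n ℝ)
      = 1 := hB.eigenvectorUnitary.2.1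
  rw [h1, Matrix.one_mul, Matrix.trace_diagonal]
  simp

lemma eigenvalues_sq_one (P : Matrix n n ℝ) (hP : P.IsHermitian) (hP2 : P * P = 1) (i : n) :
    hP.eigenvalues i ^ 2 = 1 := by
  have hme := hP.mulVec_eigenvectorBasis i
  obtain ⟨v, hveq⟩ : ∃ v : n → ℝ, (WithLp.equiv 2 (n → ℝ)) (hP.eigenvectorBasis i) = v := ⟨_, rfl⟩
  rw [show (hP.eigenvectorBasis i).ofLp = v from hveq] at hme
  have key : (hP.eigenvalues i ^ 2) • v = v := by
    calc (hP.eigenvalues i ^ 2) • v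
        = hP.eigenvalues i • (hP.eigenvalues i • v) := by rw [sq, mul_smul]
      _ = hP.eigenvalues i • (P.mulVec v) := by rw [hme]
      _ = P.mulVec (hP.eigenvalues i • v) := (Matrix.mulVec_smul _ _ _).symm
      _ = P.mulVec (P.mulVec v) := by rw [hme]
      _ = (P * P).mulVec v := by rw [Matrix.mulVec_mulVec]
      _ = v := by rw [hP2, Matrix.one_mulVec]
  by_contra hne
  have hzero : v = 0 := by
    have h3 : (hP.eigenvalues i ^ 2 - 1) • v = 0 := by
      rw [sub_smul, one_smul, key, sub_self]
    rcases smul_eq_zero.1 h3 with h | h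
    · exact absurd (by linarith [sub_eq_zero.1 h] : hP.eigenvalues i ^ 2 = 1) hne
    · exact h
  have hb1 : ‖hP.eigenvectorBasis i‖ = 1 := hP.eigenvectorBasis.orthonormal.1 i
  have hz2 : hP.eigenvectorBasis i = 0 := by
    apply (WithLp.equiv 2 (n → ℝ)).injective
    rw [hveq, hzero]
    simp
  rw [hz2, norm_zero] at hb1
  norm_num at hb1

/-- Counting lemma: a `±1`-valued function on a `2m`-element type summing to `0` has exactly
`m` positive and `m` negative values. -/
lemma count_pm {m : ℕ} (hcard : Fintype.card n = 2 * m) (f : n → ℝ)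
    (hpm : ∀ i, f i = 1 ∨ f i = -1) (hsum : ∑ i, f i = 0) :
    Nat.card {i // 0 < f i} = m ∧ Nat.card {i // f i < 0} = m := by
  classical
  set s := Finset.filter (fun i => 0 < f i) Finset.univ with hs
  have hfs : ∀ i ∈ s, f i = 1 := by
    intro i hi
    rcases hpm i with h | h
    · exact h
    · exfalso; rw [hs] at hi; simp only [Finset.mem_filter] at hi; linarith [hi.2, h.le]
  have hfns : ∀ i ∈ Finset.univ.filter (fun i => ¬ 0 < f i), f i = -1 := by
    intro i hi
    rcases hpm i with h | h
    · exfalso; simp only [Finset.mem_filter] at hi; rw [h] at hi; norm_num at hi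
    · exact h
  have hsplit : ∑ i ∈ s, f i + ∑ i ∈ Finset.univ.filter (fun i => ¬ 0 < f i), f i = 0 := by
    rw [Finset.sum_filter_add_sum_filter_not]; exact hsum
  rw [Finset.sum_congr rfl hfs, Finset.sum_congr rfl hfns] at hsplit
  simp only [Finset.sum_const, nsmul_eq_mul, mul_one, mul_neg] at hsplit
  have hcards : s.card + (Finset.univ.filter (fun i => ¬ 0 < f i)).card = 2 * m := by
    rw [Finset.card_filter_add_card_filter_not, Finset.card_univ, hcard]
  have hceq : s.card = (Finset.univ.filter (fun i => ¬ 0 < f i)).card := by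
    have : (s.card : ℝ) = ((Finset.univ.filter (fun i => ¬ 0 < f i)).card : ℝ) := by linarith
    exact_mod_cast this
  have hsm : s.card = m := by omega
  constructor
  · rw [Nat.card_eq_fintype_card, Fintype.card_subtype]; exact hsm
  · rw [Nat.card_eq_fintype_card, Fintype.card_subtype]
    rw [show Finset.filter (fun i => f i < 0) Finset.univ
        = Finset.filter (fun i => ¬ 0 < f i) Finset.univ from
      Finset.filter_congr fun i _ => by
        rcases hpm i with h | h <;> rw [h] <;> norm_num]
    omega

/-- Eigenvalues only depend on the matrix. -/
lemma eigenvalues_congr {B C : Matrix n n ℝ} (h : B = C) (hB : B.IsHermitian)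
    (hC : C.IsHermitian) : hB.eigenvalues = hC.eigenvalues := by
  subst h; rfl

end Helpers

set_option maxHeartbeats 2000000 in
/-- Let `(G,σ)` be a signed graph on `2m` vertices with a perfect
matching `M` such that for every weight function `w : E(G) → [−1,1]` with
`w(e) ∈ {−1,1}` for all `e ∈ M`, the weighted graph `(G,w)` is invertible.  Then the
spectrum of `(G,σ)` splits about the origin: exactly half of the eigenvalues are
positive and half are negative. -/
theorem invertible_for_all_weights_implies_spectrum_splits
    {m : ℕ} (G : SimpleGraph (Fin (2 * m)))
    (M : SimpleGraph (Fin (2 * m))) (hM : IsPerfectMatchingSub G M)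
    (σ : Fin (2 * m) → Fin (2 * m) → ℝ)
    (hσsymm : ∀ i j, σ i j = σ j i)
    (hσval : ∀ i j, G.Adj i j → σ i j = 1 ∨ σ i j = -1)
    (hinv : ∀ w : Fin (2 * m) → Fin (2 * m) → ℝ,
      (∀ i j, w i j = w j i) →
      (∀ i j, G.Adj i j → w i j ∈ Set.Icc (-1 : ℝ) 1) →
      (∀ i j, M.Adj i j → w i j = 1 ∨ w i j = -1) →
      (Matrix.of fun i j => if G.Adj i j then w i j else 0).det ≠ 0)
    (A : Matrix (Fin (2 * m)) (Fin (2 * m)) ℝ)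
    (hAdef : A = Matrix.of fun i j => if G.Adj i j then σ i j else 0)
    (hA : A.IsHermitian) :
    Nat.card {i // 0 < hA.eigenvalues i} = m ∧
    Nat.card {i // hA.eigenvalues i < 0} = m := by
  obtain ⟨hMG, hdeg⟩ := hM
  -- trivial case m = 0
  rcases Nat.eq_zero_or_pos m with hm0 | hmpos
  · subst hm0
    have hE : IsEmpty (Fin (2 * 0)) := by
      constructor; intro i; exact absurd i.2 (by omega)
    constructor <;> · rw [Nat.card_eq_fintype_card]; exact Fintype.card_eq_zero
  haveI : Nonempty (Fin (2 * m)) := ⟨⟨0, by omega⟩⟩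
  -- unique matching partner
  have hunique : ∀ v, ∃ u, M.Adj v u ∧ ∀ u', M.Adj v u' → u' = u := by
    intro v
    have h1 := hdeg v
    rw [ndeg, Nat.card_eq_one_iff_unique] at h1
    obtain ⟨hsub, ⟨⟨u, hu⟩⟩⟩ := h1
    exact ⟨u, hu, fun u' hu' => congrArg Subtype.val (hsub.allEq ⟨u', hu'⟩ ⟨u, hu⟩)⟩
  -- the matching matrix and the perturbation matrix
  set P : Matrix (Fin (2 * m)) (Fin (2 * m)) ℝ :=
    Matrix.of (fun i j => if M.Adj i j then σ i j else 0) with hPdef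
  set D : Matrix (Fin (2 * m)) (Fin (2 * m)) ℝ :=
    Matrix.of (fun i j => if G.Adj i j ∧ ¬ M.Adj i j then σ i j else 0) with hDdef
  set Amat : ℝ → Matrix (Fin (2 * m)) (Fin (2 * m)) ℝ := fun t => P + t • D with hAmatdef
  have hMA : ∀ i j, M.Adj i j → G.Adj i j := fun i j h => hMG h
  have hAmat : ∀ t i j, Amat t i j
      = if G.Adj i j then (if M.Adj i j then σ i j else t * σ i j) else 0 := by
    intro t i j
    simp only [hAmatdef, Matrix.add_apply, Matrix.smul_apply, hPdef, hDdef, Matrix.of_apply,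
      smul_eq_mul]
    by_cases hm' : M.Adj i j
    · have hg := hMA i j hm'
      simp [hm', hg]
    · by_cases hg : G.Adj i j <;> simp [hm', hg]
  -- all matrices on the path are symmetric
  have hAtHerm : ∀ t : ℝ, (Amat t).IsHermitian := by
    intro t
    rw [Matrix.IsHermitian]
    ext i j
    rw [Matrix.conjTranspose_apply, hAmat t j i, hAmat t i j, star_trivial]
    by_cases hg : G.Adj i j
    · have hg' : G.Adj j i := hg.symm
      by_cases hm' : M.Adj i j
      · have hm'' : M.Adj j i := hm'.symm
        simp [hg, hg', hm', hm'', hσsymm i j]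
      · have hm'' : ¬ M.Adj j i := fun h => hm' h.symm
        simp [hg, hg', hm', hm'', hσsymm i j]
    · have hg' : ¬ G.Adj j i := fun h => hg h.symm
      simp [hg, hg']
  -- all matrices on the path are invertible
  have hdet : ∀ t : ℝ, t ∈ Set.Icc (0:ℝ) 1 → (Amat t).det ≠ 0 := by
    intro t ht
    have := hinv (fun i j => if M.Adj i j then σ i j else t * σ i j)
      (by
        intro i j
        by_cases hm' : M.Adj i j
        · have : M.Adj j i := hm'.symm
          simp [hm', this, hσsymm i j]
        · have : ¬ M.Adj j i := fun h => hm' h.symm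
          simp [hm', this, hσsymm i j])
      (by
        intro i j hg
        by_cases hm' : M.Adj i j
        · simp only [hm', if_true]
          rcases hσval i j hg with h | h <;> rw [h] <;> constructor <;> norm_num
        · simp only [hm', if_false]
          rcases hσval i j hg with h | h <;> rw [h] <;> constructor <;> nlinarith [ht.1, ht.2])
      (by
        intro i j hm'
        simp only [hm', if_true]
        exact hσval i j (hMA i j hm'))
    have heq : Amat t = Matrix.of (fun i j =>
        if G.Adj i j then (if M.Adj i j then σ i j else t * σ i j) else 0) := by
      ext i j
      rw [hAmat t i j]
      simp only [Matrix.of_apply]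
    rw [heq]
    exact this
  -- P is an involution
  have hP2 : P * P = 1 := by
    ext i j
    rw [Matrix.mul_apply, Matrix.one_apply]
    obtain ⟨u, hu, huniq⟩ := hunique i
    have hsum : ∑ k, P i k * P k j = P i u * P u j := by
      refine Finset.sum_eq_single u (fun k _ hk => ?_) (by simp)
      have : ¬ M.Adj i k := fun h => hk (huniq k h)
      simp [hPdef, this]
    rw [hsum]
    by_cases hij : i = j
    · subst hij
      have hui : M.Adj u i := hu.symm
      rcases hσval i u (hMA i u hu) with h | h <;>
        simp [hPdef, hu, hui, hσsymm u i, h, if_pos rfl] <;> norm_num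
    · have : ¬ M.Adj u j := by
        intro h
        obtain ⟨w, hw, hwuniq⟩ := hunique u
        have h1 : i = w := hwuniq i hu.symm
        have h2 : j = w := hwuniq j h
        exact hij (h1.trans h2.symm)
      simp [hPdef, this, hij]
  have hA0 : Amat 0 = P := by
    simp [hAmatdef]
  have hPHerm : P.IsHermitian := hA0 ▸ hAtHerm 0
  have hDHerm : D.IsHermitian := by
    have h1 : D = Amat 1 - Amat 0 := by
      simp [hAmatdef]
    rw [h1]
    exact (hAtHerm 1).sub (hAtHerm 0)
  -- trace of P is zero
  have htrP : P.trace = 0 := by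
    rw [Matrix.trace]
    refine Finset.sum_eq_zero fun i _ => ?_
    simp [Matrix.diag, hPdef, M.irrefl]
  -- eigenvalue counts of P
  have hPcount : Nat.card {i // 0 < hPHerm.eigenvalues i} = m ∧
      Nat.card {i // hPHerm.eigenvalues i < 0} = m := by
    refine count_pm (by simp) hPHerm.eigenvalues (fun i => ?_) ?_
    · have := eigenvalues_sq_one P hPHerm hP2 i
      have h2 : (hPHerm.eigenvalues i - 1) * (hPHerm.eigenvalues i + 1) = 0 := by ring_nf; nlinarith
      rcases mul_eq_zero.1 h2 with h | h
      · left; linarith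
      · right; linarith
    · rw [sum_eigenvalues_eq_trace' P hPHerm, htrP]
  -- the uniform bound on the perturbation quadratic form
  set K : ℝ := ∑ i, (|hDHerm.eigenvalues i|) with hKdef
  have hK0 : 0 ≤ K := Finset.sum_nonneg fun i _ => abs_nonneg _
  have hKbound : ∀ x : EuclideanSpace ℝ (Fin (2 * m)),
      |⟪x, Matrix.toEuclideanLin D x⟫| ≤ K * ⟪x, x⟫ := by
    intro x
    rw [quad_expand D hDHerm, inner_self_expand hDHerm.eigenvectorBasis x]
    calc |∑ i, hDHerm.eigenvalues i * (hDHerm.eigenvectorBasis.repr x i) ^ 2|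
        ≤ ∑ i, |hDHerm.eigenvalues i * (hDHerm.eigenvectorBasis.repr x i) ^ 2| :=
          Finset.abs_sum_le_sum_abs _ _
      _ = ∑ i, |hDHerm.eigenvalues i| * (hDHerm.eigenvectorBasis.repr x i) ^ 2 := by
          refine Finset.sum_congr rfl fun i _ => ?_
          rw [abs_mul, abs_of_nonneg (sq_nonneg (hDHerm.eigenvectorBasis.repr x i))]
      _ ≤ ∑ i, |hDHerm.eigenvalues i| * (∑ j, (hDHerm.eigenvectorBasis.repr x j) ^ 2) := by
          refine Finset.sum_le_sum fun i _ => ?_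
          refine mul_le_mul_of_nonneg_left ?_ (abs_nonneg _)
          exact Finset.single_le_sum (f := fun j => (hDHerm.eigenvectorBasis.repr x j) ^ 2)
            (fun j _ => sq_nonneg _) (Finset.mem_univ i)
      _ = K * ∑ j, (hDHerm.eigenvectorBasis.repr x j) ^ 2 := by
          rw [hKdef, Finset.sum_mul]
  -- eigenvalues never vanish on the path
  have hne : ∀ t : ℝ, t ∈ Set.Icc (0:ℝ) 1 → ∀ i, (hAtHerm t).eigenvalues i ≠ 0 := by
    intro t ht i h0
    apply hdet t ht
    rw [(hAtHerm t).det_eq_prod_eigenvalues]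
    rw [Finset.prod_eq_zero (Finset.mem_univ i)]
    rw [h0]; norm_num
  -- the eigenvalue-count function along the path
  set g : Set.Icc (0:ℝ) 1 → ℕ × ℕ := fun t =>
    (Nat.card {i // 0 < (hAtHerm t.1).eigenvalues i},
     Nat.card {i // (hAtHerm t.1).eigenvalues i < 0}) with hgdef
  have hglc : IsLocallyConstant g := by
    rw [IsLocallyConstant.iff_eventually_eq]
    intro t₀
    set c : ℝ := Finset.univ.inf' Finset.univ_nonempty
      (fun i => |(hAtHerm t₀.1).eigenvalues i|) with hcdef
    have hc0 : 0 < c := by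
      rw [hcdef, Finset.lt_inf'_iff]
      intro i _
      exact abs_pos.2 (hne t₀.1 t₀.2 i)
    have hcle : ∀ i, c ≤ |(hAtHerm t₀.1).eigenvalues i| := fun i =>
      Finset.inf'_le _ (Finset.mem_univ i)
    set δ : ℝ := c / (K + 1) with hδdef
    have hδ0 : 0 < δ := div_pos hc0 (by linarith)
    have hball : ∀ᶠ s in nhds (t₀ : ℝ), |s - t₀.1| < δ := by
      have := Metric.ball_mem_nhds (t₀ : ℝ) hδ0
      filter_upwards [this] with s hs
      rwa [Metric.mem_ball, Real.dist_eq] at hs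
    have hev : ∀ᶠ t : Set.Icc (0:ℝ) 1 in nhds t₀, |t.1 - t₀.1| < δ :=
      (continuous_subtype_val.continuousAt (x := t₀)).eventually hball
    filter_upwards [hev] with t ht
    have hsub : Amat t.1 - Amat t₀.1 = (t.1 - t₀.1) • D := by
      simp only [hAmatdef]
      rw [add_sub_add_left_eq_sub, ← sub_smul]
    have hpert : ∀ x : EuclideanSpace ℝ (Fin (2 * m)), x ≠ 0 →
        |⟪x, Matrix.toEuclideanLin (Amat t.1 - Amat t₀.1) x⟫| < c * ⟪x, x⟫ := by
      intro x hx
      rw [hsub, map_smul, LinearMap.smul_apply, real_inner_smul_right, abs_mul]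
      have hxx : 0 < ⟪x, x⟫ := by
        rw [real_inner_self_eq_norm_sq]
        have : 0 < ‖x‖ := norm_pos_iff.2 hx
        positivity
      have h1 := hKbound x
      have h2 : |t.1 - t₀.1| * (K + 1) < c := by
        rw [hδdef] at ht
        have : |t.1 - t₀.1| * (K + 1) < (c / (K + 1)) * (K + 1) := by
          apply mul_lt_mul_of_pos_right ht (by linarith)
        rwa [div_mul_cancel₀ c (by linarith : K + 1 ≠ 0)] at this
      calc |t.1 - t₀.1| * |⟪x, Matrix.toEuclideanLin D x⟫|
          ≤ |t.1 - t₀.1| * (K * ⟪x, x⟫) :=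
            mul_le_mul_of_nonneg_left h1 (abs_nonneg _)
        _ ≤ (|t.1 - t₀.1| * (K + 1)) * ⟪x, x⟫ := by nlinarith [abs_nonneg (t.1 - t₀.1)]
        _ < c * ⟪x, x⟫ := by nlinarith
    have := inertia_eq (Amat t₀.1) (Amat t.1) (hAtHerm t₀.1) (hAtHerm t.1) c hc0 hcle
      (hne t.1 t.2) hpert
    rw [hgdef]
    exact Prod.ext this.1 this.2
  haveI : PreconnectedSpace (Set.Icc (0:ℝ) 1) := Subtype.preconnectedSpace isPreconnected_Icc
  have h01 : g ⟨1, by constructor <;> norm_num⟩ = g ⟨0, by constructor <;> norm_num⟩ :=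
    hglc.apply_eq_of_preconnectedSpace _ _
  -- identify the endpoints
  have hA1 : Amat 1 = A := by
    rw [hAdef]
    ext i j
    rw [hAmat 1 i j]
    simp only [Matrix.of_apply, one_mul]
    by_cases hg : G.Adj i j <;> by_cases hm' : M.Adj i j <;> simp [hg, hm']
  have heig1 : (hAtHerm 1).eigenvalues = hA.eigenvalues := eigenvalues_congr hA1 _ _
  have heig0 : (hAtHerm 0).eigenvalues = hPHerm.eigenvalues := eigenvalues_congr hA0 _ _
  have hg1 : g ⟨1, by constructor <;> norm_num⟩
      = (Nat.card {i // 0 < hA.eigenvalues i}, Nat.card {i // hA.eigenvalues i < 0}) := by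
    rw [hgdef]
    simp only [heig1]
  have hg0 : g ⟨0, by constructor <;> norm_num⟩ = (m, m) := by
    rw [hgdef]
    simp only [heig0]
    exact Prod.ext hPcount.1 hPcount.2
  rw [hg1, hg0] at h01
  exact ⟨congrArg Prod.fst h01, congrArg Prod.snd h01⟩
end

section
/- The spectrum of every (unsigned, simple) corona graph splits about the origin: if G is the corona of a graph H with n vertices, then G has 2n vertices, n of its adjacency eigenvalues are positive and n are negative. -/
open scoped Classical
open Matrix Polynomial

section aux
variable {m : Type*} [Fintype m] [DecidableEq m]

lemma charpoly_conj_aux (U V M : Matrix m m ℝ) (h1 : U * V = 1) (h2 : V * U = 1) :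
    (U * M * V).charpoly = M.charpoly := by
  have key : charmatrix (U * M * V)
      = (C : ℝ →+* ℝ[X]).mapMatrix U * charmatrix M * (C : ℝ →+* ℝ[X]).mapMatrix V := by
    unfold charmatrix
    have hUV : (C : ℝ →+* ℝ[X]).mapMatrix U * (C : ℝ →+* ℝ[X]).mapMatrix V = 1 := by
      rw [← _root_.map_mul, h1, _root_.map_one]
    have hcomm : ∀ N : Matrix m m ℝ[X], Matrix.scalar m (X : ℝ[X]) * N
        = N * Matrix.scalar m (X : ℝ[X]) := fun N =>
      (Matrix.scalar_commute (X : ℝ[X]) (fun r => Commute.all _ _) N).eq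
    rw [mul_sub, sub_mul, _root_.map_mul, _root_.map_mul]
    congr 1
    rw [← hcomm, mul_assoc, hUV, mul_one]
  unfold Matrix.charpoly
  have h3 : ((C : ℝ →+* ℝ[X]).mapMatrix V).det * ((C : ℝ →+* ℝ[X]).mapMatrix U).det = 1 := by
    rw [← det_mul, ← _root_.map_mul, h2, _root_.map_one, det_one]
  rw [key, det_mul, det_mul]
  linear_combination M.charmatrix.det * h3

lemma det_fromBlocks_diagonal {R : Type*} [CommRing R] {k : ℕ} (a b c d : Fin k → R) :
    (fromBlocks (diagonal a) (diagonal b) (diagonal c) (diagonal d)).det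
      = ∏ i, (a i * d i - b i * c i) := by
  classical
  let e : (Fin k ⊕ Fin k) ≃ (Fin 2 × Fin k) :=
    { toFun := Sum.elim (fun i => (0, i)) (fun i => (1, i))
      invFun := fun p => if p.1 = 0 then Sum.inl p.2 else Sum.inr p.2
      left_inv := by rintro (i | i) <;> simp
      right_inv := by rintro ⟨s, i⟩; fin_cases s <;> simp }
  have hsub : fromBlocks (diagonal a) (diagonal b) (diagonal c) (diagonal d)
      = (blockDiagonal (fun i => !![a i, b i; c i, d i])).submatrix e e := by
    ext x y
    rcases x with i | i <;> rcases y with j | j <;>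
      · by_cases h : i = j <;>
          simp [e, blockDiagonal_apply, fromBlocks, diagonal_apply, h, Matrix.one_apply]
  rw [hsub, det_submatrix_equiv_self, det_blockDiagonal]
  refine Finset.prod_congr rfl fun i _ => ?_
  simp [Matrix.det_fin_two_of]

end aux


/-- The corona of a graph `H` on `Fin n`: each vertex `inl i` (a vertex `v_i` of `H`)
gets a new pendant neighbor `inr i` (the vertex `u_i`). -/
def corona {n : ℕ} (H : SimpleGraph (Fin n)) : SimpleGraph (Fin n ⊕ Fin n) where
  Adj x y :=
    match x, y with
    | .inl i, .inl j => H.Adj i j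
    | .inl i, .inr j => i = j
    | .inr i, .inl j => i = j
    | .inr _, .inr _ => False
  symm := by
    constructor
    rintro (i | i) (j | j) h
    · exact H.adj_symm h
    · exact h.symm
    · exact h.symm
    · exact h.elim
  loopless := by
    constructor
    rintro (i | i) h
    · exact (H.ne_of_adj h) rfl
    · exact h.elim

/-- The spectrum of every (unsigned, simple) corona graph splits about the
origin: if `G` is the corona of a graph `H` on `n` vertices, then `G` has `2n` vertices,
`n` of its adjacency eigenvalues are positive and `n` are negative. -/
theorem corona_spectrum_splits
    {n : ℕ} (H : SimpleGraph (Fin n))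
    (A : Matrix (Fin n ⊕ Fin n) (Fin n ⊕ Fin n) ℝ)
    (hAdef : A = Matrix.of fun x y => if (corona H).Adj x y then (1 : ℝ) else 0)
    (hA : A.IsHermitian) :
    Nat.card {x // 0 < hA.eigenvalues x} = n ∧
    Nat.card {x // hA.eigenvalues x < 0} = n := by
  classical
  set B : Matrix (Fin n) (Fin n) ℝ :=
    Matrix.of (fun i j => if H.Adj i j then (1:ℝ) else 0) with hBdef
  have hB : B.IsHermitian := by
    refine Matrix.IsHermitian.ext fun i j => ?_
    simp [hBdef, SimpleGraph.adj_comm]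
  have hAblock : A = fromBlocks B 1 1 0 := by
    rw [hAdef]
    ext x y
    rcases x with i | i <;> rcases y with j | j
    · simp [hBdef, fromBlocks, show ((corona H).Adj (Sum.inl i) (Sum.inl j)) = H.Adj i j from rfl]
    · simp [fromBlocks, Matrix.one_apply,
        show ((corona H).Adj (Sum.inl i) (Sum.inr j)) = (i = j) from rfl]
    · simp [fromBlocks, Matrix.one_apply,
        show ((corona H).Adj (Sum.inr i) (Sum.inl j)) = (i = j) from rfl]
    · simp [fromBlocks, show ((corona H).Adj (Sum.inr i) (Sum.inr j)) = False from rfl]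
  set μ : Fin n → ℝ := hB.eigenvalues with hμ
  set U : Matrix (Fin n) (Fin n) ℝ := (hB.eigenvectorUnitary : Matrix (Fin n) (Fin n) ℝ) with hUdef
  have hU1 : U * star U = 1 := (Matrix.mem_unitaryGroup_iff).mp hB.eigenvectorUnitary.2
  have hU2 : star U * U = 1 := (Matrix.mem_unitaryGroup_iff').mp hB.eigenvectorUnitary.2
  have hBspec : B = U * diagonal μ * star U := by
    simpa using hB.spectral_theorem
  set M : Matrix (Fin n ⊕ Fin n) (Fin n ⊕ Fin n) ℝ :=
    fromBlocks (diagonal μ) 1 1 0 with hM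
  set V : Matrix (Fin n ⊕ Fin n) (Fin n ⊕ Fin n) ℝ := fromBlocks U 0 0 U with hV
  have hVstar : star V = fromBlocks (star U) 0 0 (star U) := by
    simp [hV, Matrix.star_eq_conjTranspose, fromBlocks_conjTranspose, fromBlocks_transpose]
  have hAVMV : A = V * M * star V := by
    rw [hAblock, hBspec, hVstar, hV, hM, fromBlocks_multiply, fromBlocks_multiply]
    simp [Matrix.mul_assoc, hU1]
  have hVVstar : V * star V = 1 := by
    rw [hVstar, hV, fromBlocks_multiply]
    simp [hU1, fromBlocks_one]
  have hstarVV : star V * V = 1 := by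
    rw [hVstar, hV, fromBlocks_multiply]
    simp [hU2, fromBlocks_one]
  have hcharA : A.charpoly = M.charpoly := by
    rw [hAVMV]; exact charpoly_conj_aux V (star V) M hVVstar hstarVV
  have hcharm : M.charmatrix = fromBlocks (diagonal fun i => (X:ℝ[X]) - C (μ i))
      (diagonal fun _ => (-1 : ℝ[X])) (diagonal fun _ => (-1:ℝ[X]))
      (diagonal fun _ => (X:ℝ[X])) := by
    ext x y
    rcases x with i | i <;> rcases y with j | j <;>
      · by_cases h : i = j <;>
          simp [charmatrix_apply, hM, fromBlocks, diagonal_apply, Matrix.one_apply, h]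
  have hcharM : M.charpoly = ∏ i : Fin n, (((X:ℝ[X]) - C (μ i)) * X - 1) := by
    unfold Matrix.charpoly
    rw [hcharm, det_fromBlocks_diagonal]
    refine Finset.prod_congr rfl fun i _ => ?_
    ring
  -- eigenvalue multiset of A from its own spectral theorem
  set ν : (Fin n ⊕ Fin n) → ℝ := hA.eigenvalues with hν
  have hcharA2 : A.charpoly = ∏ x : Fin n ⊕ Fin n, ((X:ℝ[X]) - C (ν x)) := by
    have hW1 : (hA.eigenvectorUnitary : Matrix (Fin n ⊕ Fin n) (Fin n ⊕ Fin n) ℝ)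
        * star (hA.eigenvectorUnitary : Matrix (Fin n ⊕ Fin n) (Fin n ⊕ Fin n) ℝ) = 1 :=
      (Matrix.mem_unitaryGroup_iff).mp hA.eigenvectorUnitary.2
    have hW2 : star (hA.eigenvectorUnitary : Matrix (Fin n ⊕ Fin n) (Fin n ⊕ Fin n) ℝ)
        * (hA.eigenvectorUnitary : Matrix (Fin n ⊕ Fin n) (Fin n ⊕ Fin n) ℝ) = 1 :=
      (Matrix.mem_unitaryGroup_iff').mp hA.eigenvectorUnitary.2
    have hAspec : A = (hA.eigenvectorUnitary : Matrix (Fin n ⊕ Fin n) (Fin n ⊕ Fin n) ℝ)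
        * diagonal ν * star (hA.eigenvectorUnitary : Matrix (Fin n ⊕ Fin n) (Fin n ⊕ Fin n) ℝ) := by
      simpa using hA.spectral_theorem
    rw [hAspec, charpoly_conj_aux _ _ _ hW1 hW2]
    unfold Matrix.charpoly
    have : (diagonal ν).charmatrix = diagonal (fun x => (X:ℝ[X]) - C (ν x)) := by
      ext x y
      by_cases h : x = y <;> simp [charmatrix_apply, diagonal_apply, h]
    rw [this, det_diagonal]
  set lp : Fin n → ℝ := fun i => (μ i + Real.sqrt (μ i^2 + 4))/2 with hlpdef
  set lm : Fin n → ℝ := fun i => (μ i - Real.sqrt (μ i^2 + 4))/2 with hlmdef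
  have hs : ∀ i, Real.sqrt (μ i^2+4)^2 = μ i^2 + 4 :=
    fun i => Real.sq_sqrt (by positivity)
  have hlp : ∀ i, 0 < lp i := by
    intro i
    have h0 := Real.sqrt_nonneg (μ i^2+4)
    have h1 := hs i
    simp only [hlpdef]
    nlinarith
  have hlm : ∀ i, lm i < 0 := by
    intro i
    have h0 := Real.sqrt_nonneg (μ i^2+4)
    have h1 := hs i
    simp only [hlmdef]
    nlinarith
  have hfactor : ∀ i, (((X:ℝ[X]) - C (μ i)) * X - 1)
      = ((X:ℝ[X]) - C (lp i)) * (X - C (lm i)) := by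
    intro i
    have h1 : lp i + lm i = μ i := by
      simp only [hlpdef, hlmdef]; ring
    have h2 : lp i * lm i = -1 := by
      have := hs i
      simp only [hlpdef, hlmdef]
      nlinarith
    have expand : ((X:ℝ[X]) - C (lp i)) * (X - C (lm i))
        = X*X - C (lp i + lm i)*X + C (lp i * lm i) := by
      rw [C_add, C_mul]; ring
    rw [expand, h1, h2]
    simp only [map_neg, Polynomial.C_1]
    ring
  have hprodeq : (∏ x : Fin n ⊕ Fin n, ((X:ℝ[X]) - C (ν x)))
      = (∏ i : Fin n, ((X:ℝ[X]) - C (lp i))) * ∏ i : Fin n, ((X:ℝ[X]) - C (lm i)) := by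
    rw [← hcharA2, hcharA, hcharM, ← Finset.prod_mul_distrib]
    exact Finset.prod_congr rfl fun i _ => hfactor i
  have hmeq : Finset.univ.val.map ν
      = Finset.univ.val.map lp + Finset.univ.val.map lm := by
    have hpoly : ((Finset.univ.val.map ν).map fun a => (X:ℝ[X]) - C a).prod
        = (((Finset.univ.val.map lp) + (Finset.univ.val.map lm)).map
            fun a => (X:ℝ[X]) - C a).prod := by
      rw [Multiset.map_add, Multiset.prod_add, Multiset.map_map, Multiset.map_map,
        Multiset.map_map]
      rw [show ((fun a => (X:ℝ[X]) - C a) ∘ ν) = fun x => (X:ℝ[X]) - C (ν x) from rfl,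
        show ((fun a => (X:ℝ[X]) - C a) ∘ lp) = fun i => (X:ℝ[X]) - C (lp i) from rfl,
        show ((fun a => (X:ℝ[X]) - C a) ∘ lm) = fun i => (X:ℝ[X]) - C (lm i) from rfl,
        ← Finset.prod_eq_multiset_prod, ← Finset.prod_eq_multiset_prod,
        ← Finset.prod_eq_multiset_prod]
      exact hprodeq
    have h := congrArg Polynomial.roots hpoly
    rwa [Polynomial.roots_multiset_prod_X_sub_C, Polynomial.roots_multiset_prod_X_sub_C] at h
  have hcount : ∀ p : ℝ → Prop,
      Nat.card {x // p (ν x)} = Multiset.countP p (Finset.univ.val.map ν) := by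
    intro p
    rw [Nat.card_eq_fintype_card, Fintype.card_subtype, Multiset.countP_map]
    rw [Finset.card_def, Finset.filter_val]
  constructor
  · rw [hcount (fun a => 0 < a), hmeq, Multiset.countP_add]
    have c1 : Multiset.countP (fun a => 0 < a) (Finset.univ.val.map lp)
        = Multiset.card (Finset.univ.val.map lp) := by
      rw [Multiset.countP_eq_card]
      intro a ha
      obtain ⟨i, _, rfl⟩ := Multiset.mem_map.mp ha
      exact hlp i
    have c2 : Multiset.countP (fun a => 0 < a) (Finset.univ.val.map lm) = 0 := by
      rw [Multiset.countP_eq_zero]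
      intro a ha
      obtain ⟨i, _, rfl⟩ := Multiset.mem_map.mp ha
      exact not_lt.2 (le_of_lt (hlm i))
    rw [c1, c2, Multiset.card_map]
    simp
  · rw [hcount (fun a => a < 0), hmeq, Multiset.countP_add]
    have c1 : Multiset.countP (fun a => a < 0) (Finset.univ.val.map lp) = 0 := by
      rw [Multiset.countP_eq_zero]
      intro a ha
      obtain ⟨i, _, rfl⟩ := Multiset.mem_map.mp ha
      exact not_lt.2 (le_of_lt (hlp i))
    have c2 : Multiset.countP (fun a => a < 0) (Finset.univ.val.map lm)
        = Multiset.card (Finset.univ.val.map lm) := by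
      rw [Multiset.countP_eq_card]
      intro a ha
      obtain ⟨i, _, rfl⟩ := Multiset.mem_map.mp ha
      exact hlm i
    rw [c1, c2, Multiset.card_map]
    simp
end
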